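/- arXiv:1009.3144 — 10 statements merged into one kernel-verified Lean document; each statement's English description precedes it below -/
import Mathlib

section
/- Let q ∈ ℝ[x] be a positive definite polynomial of degree two (i.e., q(t) > 0 for all t ∈ ℝ). Then for every positive semidefinite polynomial f ∈ ℝ[x] (i.e., f(t) ≥ 0 for all t ∈ ℝ), there exist polynomials ξ, η ∈ ℝ[x] such that f = η² + q·ξ². -/
open Polynomial

lemma eval_quad (p : Polynomial ℝ) (hp : p.natDegree ≤ 2) (t : ℝ) :
    p.eval t = p.coeff 0 + p.coeff 1 * t + p.coeff 2 * t ^ 2 := by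
  rw [Polynomial.eval_eq_sum_range' (Nat.lt_succ_of_le hp)]
  simp [Finset.sum_range_succ]

lemma coeff2_nonneg (p : Polynomial ℝ) (hp : p.natDegree ≤ 2) (hpsd : ∀ t, 0 ≤ p.eval t) :
    0 ≤ p.coeff 2 := by
  by_contra h
  push_neg at h
  have hc : 0 ≤ p.coeff 0 := by simpa [eval_quad p hp 0] using hpsd 0
  set t := Real.sqrt ((p.coeff 0 + 1) / (-p.coeff 2)) with ht
  have ht2 : t ^ 2 = (p.coeff 0 + 1) / (-p.coeff 2) :=
    Real.sq_sqrt (div_nonneg (by linarith) (by linarith))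
  have h1 := hpsd t; have h2 := hpsd (-t)
  rw [eval_quad p hp] at h1 h2
  have h3 : p.coeff 2 * t ^ 2 = -(p.coeff 0 + 1) := by
    have hne : p.coeff 2 ≠ 0 := ne_of_lt h
    rw [ht2, div_neg, mul_neg, mul_div_cancel₀ _ hne]
  nlinarith

lemma disc_nonpos (p : Polynomial ℝ) (hp : p.natDegree ≤ 2) (hpsd : ∀ t, 0 ≤ p.eval t) :
    p.coeff 1 ^ 2 ≤ 4 * p.coeff 2 * p.coeff 0 := by
  have ha := coeff2_nonneg p hp hpsd
  rcases eq_or_lt_of_le ha with h0 | hpos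
  · have hb : p.coeff 1 = 0 := by
      by_contra hb
      have h1 := hpsd (-(p.coeff 0 + 1) / p.coeff 1)
      have hc : 0 ≤ p.coeff 0 := by simpa [eval_quad p hp 0] using hpsd 0
      rw [eval_quad p hp] at h1
      rw [← h0] at h1
      field_simp at h1
      have hb2 : 0 < p.coeff 1 ^ 2 := lt_of_le_of_ne (sq_nonneg _) (Ne.symm (pow_ne_zero 2 hb))
      have h5 := mul_nonneg h1 hb2.le
      rw [div_mul_cancel₀ _ hb2.ne'] at h5
      nlinarith
    rw [hb, ← h0]; norm_num
  · have h1 := hpsd (-(p.coeff 1) / (2 * p.coeff 2))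
    rw [eval_quad p hp] at h1
    have h2 : p.coeff 2 ≠ 0 := ne_of_gt hpos
    have h3 : 0 ≤ (p.coeff 0 + p.coeff 1 * (-(p.coeff 1) / (2 * p.coeff 2)) + p.coeff 2 * (-(p.coeff 1) / (2 * p.coeff 2)) ^ 2) * (4 * p.coeff 2) := by positivity
    have h4 : (p.coeff 0 + p.coeff 1 * (-(p.coeff 1) / (2 * p.coeff 2)) + p.coeff 2 * (-(p.coeff 1) / (2 * p.coeff 2)) ^ 2) * (4 * p.coeff 2) = 4 * p.coeff 2 * p.coeff 0 - p.coeff 1 ^ 2 := by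
      field_simp
      ring
    linarith

lemma lemA (q : Polynomial ℝ) (hq : q.natDegree ≤ 2) (hA : 0 < q.coeff 2)
    (hqpos : ∀ t, 0 < q.eval t) (p : Polynomial ℝ) (hp : p.natDegree ≤ 2)
    (hpsd : ∀ t, 0 ≤ p.eval t) :
    ∃ ξ η : Polynomial ℝ, p = η ^ 2 + q * ξ ^ 2 := by
  set a := p.coeff 2 with ha_def
  set b := p.coeff 1 with hb_def
  set c := p.coeff 0 with hc_def
  set A := q.coeff 2 with hA_def
  set B := q.coeff 1 with hB_def
  set Cq := q.coeff 0 with hC_def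
  have ha : 0 ≤ a := coeff2_nonneg p hp hpsd
  have hdisc : b ^ 2 ≤ 4 * a * c := disc_nonpos p hp hpsd
  set D : ℝ → ℝ := fun s => (b - s * B) ^ 2 - 4 * (a - s * A) * (c - s * Cq) with hD
  have hDcont : Continuous D := by fun_prop
  have hD0 : D 0 ≤ 0 := by simp only [hD]; nlinarith
  have haA : (0:ℝ) ≤ a / A := div_nonneg ha hA.le
  have hDa : 0 ≤ D (a / A) := by
    have h0 : a - a / A * A = 0 := by field_simp; ring
    simp only [hD, h0]
    nlinarith [sq_nonneg (b - a / A * B)]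
  have hIcc : (0:ℝ) ∈ Set.Icc (D 0) (D (a/A)) := ⟨hD0, hDa⟩
  obtain ⟨s₁, hs₁I, hs₁⟩ := intermediate_value_Icc haA hDcont.continuousOn hIcc
  set S := Set.Icc 0 (a / A) ∩ D ⁻¹' {0} with hS
  have hSne : S.Nonempty := ⟨s₁, hs₁I, hs₁⟩
  have hSc : IsClosed S := isClosed_Icc.inter (isClosed_singleton.preimage hDcont)
  have hSbdd : BddBelow S := ⟨0, fun x hx => hx.1.1⟩
  set s₀ := sInf S with hs₀def
  have hs₀S : s₀ ∈ S := hSc.csInf_mem hSne hSbdd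
  have hs₀0 : 0 ≤ s₀ := hs₀S.1.1
  have hs₀a : s₀ ≤ a / A := hs₀S.1.2
  have hDs₀ : D s₀ = 0 := hs₀S.2
  have hneg : ∀ s, 0 ≤ s → s < s₀ → D s < 0 := by
    intro s hs hss
    by_contra hDs
    push_neg at hDs
    obtain ⟨s', hs'I, hs'⟩ := intermediate_value_Icc hs hDcont.continuousOn ⟨hD0, hDs⟩
    have hle : s₀ ≤ s' :=
      csInf_le hSbdd ⟨⟨hs'I.1, le_trans hs'I.2 (le_trans hss.le hs₀a)⟩, hs'⟩
    have := hs'I.2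
    linarith
  have hkey : ∀ t, s₀ * q.eval t ≤ p.eval t := by
    intro t
    by_contra hlt
    push_neg at hlt
    have hqt := hqpos t
    set s := (p.eval t / q.eval t + s₀) / 2 with hs_def
    have h1 : p.eval t / q.eval t < s₀ := (div_lt_iff₀ hqt).2 (by linarith)
    have h2 : 0 ≤ p.eval t / q.eval t := div_nonneg (hpsd t) hqt.le
    have hs0 : 0 ≤ s := by rw [hs_def]; linarith
    have hss : s < s₀ := by rw [hs_def]; linarith
    have hDs := hneg s hs0 hss
    have hsA : 0 < a - s * A := by
      have hlt2 : s < a / A := lt_of_lt_of_le hss hs₀a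
      have := (lt_div_iff₀ hA).1 hlt2
      linarith
    simp only [hD] at hDs
    have hpt : 0 ≤ (a - s * A) * t ^ 2 + (b - s * B) * t + (c - s * Cq) := by
      nlinarith [sq_nonneg (2 * (a - s * A) * t + (b - s * B))]
    have hev : p.eval t - s * q.eval t
        = (a - s * A) * t ^ 2 + (b - s * B) * t + (c - s * Cq) := by
      rw [eval_quad p hp, eval_quad q hq]; ring
    have hlt3 : p.eval t < s * q.eval t := by
      have : p.eval t / q.eval t < s := by rw [hs_def]; linarith
      exact (div_lt_iff₀ hqt).1 this
    linarith
  set a' := a - s₀ * A with ha'_def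
  set b' := b - s₀ * B with hb'_def
  set c' := c - s₀ * Cq with hc'_def
  have hb'2 : b' ^ 2 = 4 * a' * c' := by
    have := hDs₀
    simp only [hD] at this
    rw [ha'_def, hb'_def, hc'_def]; linarith
  have ha' : 0 ≤ a' := by
    have := (le_div_iff₀ hA).1 hs₀a
    rw [ha'_def]; linarith
  have hptw : ∀ t, p.eval t = a' * t ^ 2 + b' * t + c' + s₀ * q.eval t := by
    intro t
    rw [eval_quad p hp, eval_quad q hq, ha'_def, hb'_def, hc'_def,
      ha_def, hb_def, hc_def, hA_def, hB_def, hC_def]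
    ring
  rcases eq_or_lt_of_le ha' with h0 | hpos
  · have hb0 : b' = 0 := by
      have hsq : b' ^ 2 = 0 := by rw [hb'2, ← h0]; ring
      exact (pow_eq_zero_iff two_ne_zero).1 hsq
    have hc'0 : 0 ≤ c' := by
      have h1 := hkey 0
      have h2 := hptw 0
      rw [← h0, hb0] at h2
      simp at h2
      linarith
    refine ⟨Polynomial.C (Real.sqrt s₀), Polynomial.C (Real.sqrt c'), Polynomial.funext fun t => ?_⟩
    simp only [eval_add, eval_mul, eval_pow, eval_C]
    rw [Real.sq_sqrt hc'0, Real.sq_sqrt hs₀0, hptw t, ← h0, hb0]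
    ring
  · have hsa : Real.sqrt a' ^ 2 = a' := Real.sq_sqrt hpos.le
    have hc'0 : 0 ≤ c' := by nlinarith
    have hsc : Real.sqrt c' ^ 2 = c' := Real.sq_sqrt hc'0
    have hmul : Real.sqrt a' * Real.sqrt c' = |b'| / 2 := by
      have h4 : a' * c' = (b' / 2) ^ 2 := by linear_combination (-1/4 : ℝ) * hb'2
      rw [← Real.sqrt_mul hpos.le, h4, Real.sqrt_sq_eq_abs, abs_div, abs_two]
    rcases le_or_gt 0 b' with hb | hb
    · have hmul' : Real.sqrt a' * Real.sqrt c' = b' / 2 := by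
        rw [hmul, abs_of_nonneg hb]
      refine ⟨Polynomial.C (Real.sqrt s₀),
        Polynomial.C (Real.sqrt a') * X + Polynomial.C (Real.sqrt c'),
        Polynomial.funext fun t => ?_⟩
      simp only [eval_add, eval_mul, eval_pow, eval_C, eval_X]
      rw [Real.sq_sqrt hs₀0, hptw t]
      linear_combination (-(t ^ 2)) * hsa - (2 * t) * hmul' - hsc
    · have hmul' : Real.sqrt a' * Real.sqrt c' = -b' / 2 := by
        rw [hmul, abs_of_neg hb]
      refine ⟨Polynomial.C (Real.sqrt s₀),
        Polynomial.C (Real.sqrt a') * X - Polynomial.C (Real.sqrt c'),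
        Polynomial.funext fun t => ?_⟩
      simp only [eval_add, eval_sub, eval_mul, eval_pow, eval_C, eval_X]
      rw [Real.sq_sqrt hs₀0, hptw t]
      linear_combination (-(t ^ 2)) * hsa + (2 * t) * hmul' - hsc

lemma key (q : Polynomial ℝ) (hq2 : q.degree = 2) (hqpos : ∀ t : ℝ, 0 < q.eval t) :
    ∀ n : ℕ, ∀ f : Polynomial ℝ, f.natDegree ≤ n → (∀ t : ℝ, 0 ≤ f.eval t) →
    ∃ ξ η : Polynomial ℝ, f = η ^ 2 + q * ξ ^ 2 := by
  have hqd : q.natDegree = 2 := natDegree_eq_of_degree_eq_some hq2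
  have hq0 : q ≠ 0 := fun h => by simp [h] at hq2
  have hA : 0 < q.coeff 2 := by
    have h1 : q.coeff 2 ≠ 0 := by
      have := Polynomial.leadingCoeff_ne_zero.2 hq0
      rwa [Polynomial.leadingCoeff, hqd] at this
    exact lt_of_le_of_ne (coeff2_nonneg q hqd.le fun t => (hqpos t).le) (Ne.symm h1)
  intro n
  induction n using Nat.strong_induction_on with
  | _ n ih =>
    intro f hdeg hf
    by_cases h2 : f.natDegree ≤ 2
    · exact lemA q hqd.le hA hqpos f h2 hf
    push_neg at h2
    have hf0 : f ≠ 0 := fun h => by simp [h] at h2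
    obtain ⟨z, hz⟩ : ∃ z : ℂ, aeval z f = 0 :=
      IsAlgClosed.exists_aeval_eq_zero ℂ f
        (by rw [degree_eq_natDegree hf0]; exact_mod_cast (by omega : f.natDegree ≠ 0))
    by_cases him : z.im = 0
    · -- real root
      set r := z.re with hr_def
      have hzr : z = (r : ℂ) := Complex.ext rfl him
      have hr : f.eval r = 0 := by
        rw [hzr] at hz
        erw [aeval_ofReal, RCLike.ofReal_eq_zero] at hz
        exact hz
      have hder : f.derivative.eval r = 0 := by
        have hmin : IsLocalMin (fun t => f.eval t) r :=
          Filter.Eventually.of_forall fun t => by simpa [hr] using hf t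
        have := hmin.deriv_eq_zero
        rwa [Polynomial.deriv] at this
      obtain ⟨g, hg⟩ : (X - Polynomial.C r) ∣ f := dvd_iff_isRoot.2 hr
      have hgr : g.eval r = 0 := by
        have hd : f.derivative = g + (X - Polynomial.C r) * g.derivative := by
          rw [hg, derivative_mul]
          simp
        have h6 := congrArg (Polynomial.eval r) hd
        simp at h6
        linarith [h6, hder]
      obtain ⟨h, hh⟩ : (X - Polynomial.C r) ∣ g := dvd_iff_isRoot.2 hgr
      have hfh : f = (X - Polynomial.C r) ^ 2 * h := by rw [hg, hh]; ring
      have h1 : ∀ t, t ≠ r → 0 ≤ h.eval t := by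
        intro t ht
        have h3 := hf t
        rw [hfh] at h3
        simp only [eval_mul, eval_pow, eval_sub, eval_X, eval_C] at h3
        have h4 : 0 < (t - r) ^ 2 :=
          lt_of_le_of_ne (sq_nonneg _) (Ne.symm (pow_ne_zero 2 (sub_ne_zero.2 ht)))
        nlinarith
      have hhpsd : ∀ t, 0 ≤ h.eval t := by
        intro t
        rcases eq_or_ne t r with heq | hne
        · rw [heq]
          have hcont : Filter.Tendsto (fun s => h.eval s) (nhdsWithin r {r}ᶜ) (nhds (h.eval r)) :=
            (h.continuous_aeval.tendsto r).mono_left nhdsWithin_le_nhds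
          refine ge_of_tendsto hcont ?_
          filter_upwards [self_mem_nhdsWithin] with s hs
          exact h1 s hs
        · exact h1 t hne
      have hh0 : h ≠ 0 := fun e => hf0 (by rw [hfh, e, mul_zero])
      have hX0 : (X - Polynomial.C r) ^ 2 ≠ 0 := pow_ne_zero _ (X_sub_C_ne_zero r)
      have hdh : h.natDegree + 2 = f.natDegree := by
        rw [hfh, natDegree_mul hX0 hh0, natDegree_pow, natDegree_X_sub_C]
        ring
      obtain ⟨ξ₁, η₁, hη⟩ := ih h.natDegree (by omega) h le_rfl hhpsd
      exact ⟨(X - Polynomial.C r) * ξ₁, (X - Polynomial.C r) * η₁, by rw [hfh, hη]; ring⟩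
    · -- nonreal root
      set p : Polynomial ℝ := X ^ 2 - Polynomial.C (2 * z.re) * X + Polynomial.C (‖z‖ ^ 2)
        with hp_def
      obtain ⟨h, hh⟩ := f.quadratic_dvd_of_aeval_eq_zero_im_ne_zero hz him
      rw [← hp_def] at hh
      have hnormsq : ‖z‖ ^ 2 = z.re ^ 2 + z.im ^ 2 := by
        rw [Complex.sq_norm, Complex.normSq_apply]; ring
      have hppos : ∀ t, 0 < p.eval t := by
        intro t
        simp only [hp_def, eval_add, eval_sub, eval_mul, eval_pow, eval_X, eval_C, hnormsq]
        have him2 : 0 < z.im ^ 2 := by positivity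
        nlinarith [sq_nonneg (t - z.re)]
      have hpd : p.natDegree = 2 := by rw [hp_def]; compute_degree!
      obtain ⟨ξ₀, η₀, hp0⟩ := lemA q hqd.le hA hqpos p hpd.le fun t => (hppos t).le
      have hhpsd : ∀ t, 0 ≤ h.eval t := by
        intro t
        have h3 := hf t
        rw [hh] at h3
        simp only [eval_mul] at h3
        by_contra hcon
        push_neg at hcon
        nlinarith [hppos t]
      have hp0' : p ≠ 0 := fun e => by simp [e] at hpd
      have hh0 : h ≠ 0 := fun e => hf0 (by rw [hh, e, mul_zero])
      have hdh : h.natDegree + 2 = f.natDegree := by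
        rw [hh, natDegree_mul hp0' hh0, hpd]; ring
      obtain ⟨ξ₁, η₁, hη⟩ := ih h.natDegree (by omega) h le_rfl hhpsd
      exact ⟨η₀ * ξ₁ + η₁ * ξ₀, η₀ * η₁ - q * ξ₀ * ξ₁, by rw [hh, hp0, hη]; ring⟩

theorem stmt_0 (q : Polynomial ℝ) (hq2 : q.degree = 2)
    (hqpos : ∀ t : ℝ, 0 < q.eval t)
    (f : Polynomial ℝ) (hf : ∀ t : ℝ, 0 ≤ f.eval t) :
    ∃ ξ η : Polynomial ℝ, f = η ^ 2 + q * ξ ^ 2 := by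
  exact key q hq2 hqpos f.natDegree f le_rfl hf
end

section
/- Let f ∈ ℝ[x] be a monic positive definite polynomial of degree 2, say f = (x+a)² + b² with b ≠ 0. Then there exists exactly one real number λ ≥ 0 such that f − λ(x²+1) is the square of a real polynomial. Explicitly, if a = 0 then λ = min{1, b²}; if a ≠ 0 then λ is the unique value with 0 ≤ λ < 1 satisfying (1−λ)(a²+b²−λ) − a² = 0. -/
open Polynomial

private lemma p_nf (a b lam : ℝ) :
    (X + C a) ^ 2 + C (b ^ 2) - C lam * (X ^ 2 + 1)
      = C (1 - lam) * X ^ 2 + C (2 * a) * X + C (a ^ 2 + b ^ 2 - lam) := by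
  simp only [map_sub, map_add, map_pow, map_mul, map_one, map_ofNat]
  ring

private lemma sq_nf (c d : ℝ) :
    (C c * X + C d) * (C c * X + C d)
      = C (c ^ 2) * X ^ 2 + C (2 * (c * d)) * X + C (d ^ 2) := by
  simp only [map_pow, map_mul, map_ofNat]
  ring

private lemma coeff_eqs {u v w u' v' w' : ℝ}
    (h : C u * X ^ 2 + C v * X + C w = C u' * X ^ 2 + C v' * X + C w') :
    u = u' ∧ v = v' ∧ w = w' := by
  refine ⟨?_, ?_, ?_⟩
  · simpa [coeff_X_pow] using congrArg (fun p => Polynomial.coeff p 2) h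
  · simpa [coeff_X_pow] using congrArg (fun p => Polynomial.coeff p 1) h
  · simpa [coeff_X_pow] using congrArg (fun p => Polynomial.coeff p 0) h

private lemma isSquare_iff (a b lam : ℝ) :
    IsSquare ((X + C a) ^ 2 + C (b ^ 2) - C lam * (X ^ 2 + 1)) ↔
      ∃ c d : ℝ, 1 - lam = c ^ 2 ∧ a = c * d ∧ a ^ 2 + b ^ 2 - lam = d ^ 2 := by
  rw [p_nf]
  constructor
  · rintro ⟨g, hg⟩
    by_cases hg0 : g = 0
    · subst hg0
      rw [mul_zero] at hg
      have h := coeff_eqs (hg.trans (by simp : (0:ℝ[X]) = C 0 * X ^ 2 + C 0 * X + C 0))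
      exact ⟨0, 0, by nlinarith [h.1], by nlinarith [h.2.1], by nlinarith [h.2.2]⟩
    · have hnd : (C (1 - lam) * X ^ 2 + C (2 * a) * X + C (a ^ 2 + b ^ 2 - lam)).natDegree ≤ 2 := by
        compute_degree
      rw [hg, natDegree_mul hg0 hg0] at hnd
      have hdg : g.degree ≤ 1 := by
        have h1 : g.natDegree ≤ 1 := by omega
        exact le_trans (Polynomial.degree_le_natDegree) (by exact_mod_cast Nat.cast_le.mpr h1)
      have hge := Polynomial.eq_X_add_C_of_degree_le_one hdg
      rw [hge, sq_nf] at hg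
      obtain ⟨h1, h2, h3⟩ := coeff_eqs hg
      exact ⟨g.coeff 1, g.coeff 0, h1, by linarith, h3⟩
  · rintro ⟨c, d, h1, h2, h3⟩
    refine ⟨C c * X + C d, ?_⟩
    rw [sq_nf, h1, h3, h2]


theorem stmt_2 (a b : ℝ) (hb : b ≠ 0) :
    (∃! lam : ℝ, 0 ≤ lam ∧
      IsSquare ((X + C a) ^ 2 + C (b ^ 2) - C lam * (X ^ 2 + 1))) ∧
    (∀ lam : ℝ, 0 ≤ lam →
      IsSquare ((X + C a) ^ 2 + C (b ^ 2) - C lam * (X ^ 2 + 1)) →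
      (a = 0 → lam = min 1 (b ^ 2)) ∧
      (a ≠ 0 → lam < 1 ∧ (1 - lam) * (a ^ 2 + b ^ 2 - lam) - a ^ 2 = 0)) := by
  -- from the three coefficient equations to the real conditions
  have hQ : ∀ lam c d : ℝ, 1 - lam = c ^ 2 → a = c * d → a ^ 2 + b ^ 2 - lam = d ^ 2 →
      0 ≤ 1 - lam ∧ 0 ≤ a ^ 2 + b ^ 2 - lam ∧ (1 - lam) * (a ^ 2 + b ^ 2 - lam) = a ^ 2 := by
    intro lam c d h1 h2 h3
    refine ⟨by rw [h1]; positivity, by rw [h3]; positivity, ?_⟩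
    rw [h1, h3, h2]; ring
  -- converse: conditions give the square decomposition
  have hcd : ∀ lam : ℝ, 0 ≤ 1 - lam → 0 ≤ a ^ 2 + b ^ 2 - lam →
      (1 - lam) * (a ^ 2 + b ^ 2 - lam) = a ^ 2 →
      ∃ c d : ℝ, 1 - lam = c ^ 2 ∧ a = c * d ∧ a ^ 2 + b ^ 2 - lam = d ^ 2 := by
    intro lam h1 h2 h3
    rcases le_or_gt 0 a with ha | ha
    · refine ⟨Real.sqrt (1 - lam), Real.sqrt (a ^ 2 + b ^ 2 - lam),
        (Real.sq_sqrt h1).symm, ?_, (Real.sq_sqrt h2).symm⟩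
      rw [← Real.sqrt_mul h1, h3, Real.sqrt_sq ha]
    · refine ⟨Real.sqrt (1 - lam), -Real.sqrt (a ^ 2 + b ^ 2 - lam),
        (Real.sq_sqrt h1).symm, ?_, by rw [neg_pow]; simp [Real.sq_sqrt h2]⟩
      rw [mul_neg, ← Real.sqrt_mul h1, h3, Real.sqrt_sq_eq_abs, abs_of_neg ha, neg_neg]
  set s : ℝ := Real.sqrt ((1 + a ^ 2 + b ^ 2) ^ 2 - 4 * b ^ 2) with hs_def
  have hD : (0:ℝ) ≤ (1 + a ^ 2 + b ^ 2) ^ 2 - 4 * b ^ 2 := by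
    nlinarith [mul_nonneg (by positivity : (0:ℝ) ≤ a ^ 2 + (b - 1) ^ 2)
      (by positivity : (0:ℝ) ≤ a ^ 2 + (b + 1) ^ 2)]
  have hs2 : s ^ 2 = (1 + a ^ 2 + b ^ 2) ^ 2 - 4 * b ^ 2 := Real.sq_sqrt hD
  have hs0 : 0 ≤ s := Real.sqrt_nonneg _
  have hge1 : a ^ 2 + b ^ 2 - 1 ≤ s := by nlinarith [sq_nonneg a]
  have hge2 : 1 - (a ^ 2 + b ^ 2) ≤ s := by nlinarith [sq_nonneg a]
  have hle : s ≤ 1 + a ^ 2 + b ^ 2 := by nlinarith [sq_nonneg b]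
  set lam0 : ℝ := (1 + a ^ 2 + b ^ 2 - s) / 2 with hl_def
  have hl0 : 0 ≤ lam0 := by simp only [hl_def]; linarith
  have hl1 : lam0 ≤ 1 := by simp only [hl_def]; linarith
  have hl2 : lam0 ≤ a ^ 2 + b ^ 2 := by simp only [hl_def]; linarith
  have hroot : (1 - lam0) * (a ^ 2 + b ^ 2 - lam0) = a ^ 2 := by
    simp only [hl_def]; nlinarith [hs2]
  constructor
  · refine ⟨lam0, ⟨hl0, (isSquare_iff a b lam0).mpr
      (hcd lam0 (by linarith) (by linarith) hroot)⟩, ?_⟩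
    rintro y ⟨hy0, hysq⟩
    obtain ⟨c, d, h1, h2, h3⟩ := (isSquare_iff a b y).mp hysq
    obtain ⟨e1, e2, e3⟩ := hQ y c d h1 h2 h3
    have hfact : (y - lam0) * (y + lam0 - (1 + a ^ 2 + b ^ 2)) = 0 := by
      linear_combination e3 - hroot
    rcases mul_eq_zero.mp hfact with h | h
    · linarith
    · linarith
  · intro lam hlam hsq
    obtain ⟨c, d, h1, h2, h3⟩ := (isSquare_iff a b lam).mp hsq
    obtain ⟨e1, e2, e3⟩ := hQ lam c d h1 h2 h3
    constructor
    · intro ha0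
      subst ha0
      have e3' : (1 - lam) * (0 ^ 2 + b ^ 2 - lam) = 0 := by rw [e3]; ring
      rcases mul_eq_zero.mp e3' with h | h
      · rw [min_eq_left (by nlinarith : (1:ℝ) ≤ b ^ 2)]; linarith
      · rw [min_eq_right (by nlinarith : b ^ 2 ≤ (1:ℝ))]; linarith
    · intro ha
      refine ⟨?_, by linarith⟩
      rcases lt_or_eq_of_le (by linarith : lam ≤ 1) with h | h
      · exact h
      · exfalso
        rw [h] at e3
        have ha2 : 0 < a ^ 2 := by positivity
        nlinarith
end

section
/- Let q ∈ ℝ[x,y] be a positive definite binary quadratic form and let f ∈ ℝ[x,y] be a positive semidefinite binary form of degree 2d. Then there exist homogeneous forms ξ, η ∈ ℝ[x,y] with deg(ξ) = d−1, deg(η) = d, and f = η² + q·ξ². -/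
section OneVar
open Polynomial

set_option maxHeartbeats 1000000 in
lemma quad_scalar (α β γ b c : ℝ) (hα : 0 < α)
    (hQ : ∀ t : ℝ, 0 < α*t^2 + β*t + γ)
    (hP : ∀ t : ℝ, 0 ≤ t^2 + b*t + c) :
    ∃ u v lam : ℝ, 0 ≤ lam ∧ u^2 + lam*α = 1 ∧ 2*u*v + lam*β = b ∧ v^2 + lam*γ = c := by
  have hγ : 0 < γ := by have := hQ 0; nlinarith
  have hdq : 0 < 4*α*γ - β^2 := by
    have := hQ (-β/(2*α)); field_simp at this; nlinarith
  have hdp : 0 ≤ 4*c - b^2 := by have := hP (-b/2); nlinarith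
  have hw : 0 < α*b^2/2 - β*b + 2*γ := by have := hQ (-b/2); nlinarith
  have he2pos : 0 < 2*α*c + 2*γ - β*b := by nlinarith
  have hdisc : 0 ≤ (2*α*c + 2*γ - β*b)^2 - (4*α*γ - β^2)*(4*c - b^2) := by
    have key : α^2*((2*α*c + 2*γ - β*b)^2 - (4*α*γ - β^2)*(4*c - b^2))*4
        = (α^2*(4*c - b^2) + 2*α*(α*b^2/2 - β*b + 2*γ) - 2*(4*α*γ - β^2))^2
          + 4*(4*α*γ - β^2)*(β - α*b)^2 := by ring
    nlinarith [key, sq_nonneg (α^2*(4*c - b^2) + 2*α*(α*b^2/2 - β*b + 2*γ) - 2*(4*α*γ - β^2)),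
      mul_nonneg hdq.le (sq_nonneg (β - α*b)), sq_nonneg α, mul_pos hα hα]
  set s := Real.sqrt ((2*α*c + 2*γ - β*b)^2 - (4*α*γ - β^2)*(4*c - b^2)) with hs_def
  have hs0 : 0 ≤ s := Real.sqrt_nonneg _
  have hs2 : s^2 = (2*α*c + 2*γ - β*b)^2 - (4*α*γ - β^2)*(4*c - b^2) := Real.sq_sqrt hdisc
  have hse : s ≤ 2*α*c + 2*γ - β*b := by
    have h1 : s ≤ Real.sqrt ((2*α*c + 2*γ - β*b)^2) := Real.sqrt_le_sqrt (by nlinarith)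
    rwa [Real.sqrt_sq he2pos.le] at h1
  set lam := (2*α*c + 2*γ - β*b - s)/(4*α*γ - β^2) with hlam
  have hlam0 : 0 ≤ lam := div_nonneg (by linarith) (by linarith)
  have hld : lam * (4*α*γ - β^2) = 2*α*c + 2*γ - β*b - s := by
    rw [hlam]; exact div_mul_cancel₀ _ (ne_of_gt hdq)
  have hkey : lam * (2*α*c + 2*γ - β*b + s) = 4*c - b^2 := by
    have h2 : (lam * (2*α*c + 2*γ - β*b + s)) * (4*α*γ - β^2) = (4*c - b^2) * (4*α*γ - β^2) := by
      have h3 : (lam * (4*α*γ - β^2)) * (2*α*c + 2*γ - β*b + s)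
          = (2*α*c + 2*γ - β*b - s) * (2*α*c + 2*γ - β*b + s) := by rw [hld]
      nlinarith [h3, hs2]
    exact mul_right_cancel₀ (ne_of_gt hdq) h2
  have hprod : 4*(1 - lam*α)*(c - lam*γ) = (b - lam*β)^2 := by
    linear_combination lam * hld - hkey
  have h1 : 0 ≤ 1 - lam*α := by
    have hrw : 1 - lam*α = ((4*α*γ - β^2) - α*(2*α*c + 2*γ - β*b - s))/(4*α*γ - β^2) := by
      rw [eq_div_iff (ne_of_gt hdq)]; linear_combination (-α) * hld
    rw [hrw]
    apply div_nonneg _ hdq.le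
    rcases le_or_gt (α*(2*α*c + 2*γ - β*b)) (4*α*γ - β^2) with h | h
    · nlinarith [mul_nonneg hα.le hs0]
    · have hsq : (α*s)^2 ≥ (α*(2*α*c + 2*γ - β*b) - (4*α*γ - β^2))^2 := by
        have h5 : (α*s)^2 = α^2*((2*α*c + 2*γ - β*b)^2 - (4*α*γ - β^2)*(4*c - b^2)) := by
          rw [mul_pow, hs2]
        nlinarith [mul_nonneg hdq.le (sq_nonneg (β - α*b))]
      nlinarith [hsq, mul_nonneg hα.le hs0, h]
  have h2 : 0 ≤ c - lam*γ := by
    have hrw : c - lam*γ = (c*(4*α*γ - β^2) - γ*(2*α*c + 2*γ - β*b - s))/(4*α*γ - β^2) := by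
      rw [eq_div_iff (ne_of_gt hdq)]; linear_combination (-γ) * hld
    rw [hrw]
    apply div_nonneg _ hdq.le
    rcases le_or_gt (γ*(2*α*c + 2*γ - β*b)) (c*(4*α*γ - β^2)) with h | h
    · nlinarith [mul_nonneg hγ.le hs0]
    · have hsq : (γ*s)^2 ≥ (γ*(2*α*c + 2*γ - β*b) - c*(4*α*γ - β^2))^2 := by
        have h5 : (γ*s)^2 = γ^2*((2*α*c + 2*γ - β*b)^2 - (4*α*γ - β^2)*(4*c - b^2)) := by
          rw [mul_pow, hs2]
        nlinarith [mul_nonneg hdq.le (sq_nonneg (γ*b - c*β))]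
      nlinarith [hsq, mul_nonneg hγ.le hs0, h]
  set u := Real.sqrt (1 - lam*α) with hu
  set w := Real.sqrt (c - lam*γ) with hwdef
  have hu2 : u^2 = 1 - lam*α := Real.sq_sqrt h1
  have hw2 : w^2 = c - lam*γ := Real.sq_sqrt h2
  have h2uw : 2*u*w = |b - lam*β| := by
    have hsq : (2*u*w)^2 = (b - lam*β)^2 := by
      rw [mul_pow, mul_pow, hu2, hw2]; nlinarith [hprod]
    have h4 : 0 ≤ 2*u*w := by positivity
    calc 2*u*w = Real.sqrt ((2*u*w)^2) := (Real.sqrt_sq h4).symm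
      _ = Real.sqrt ((b - lam*β)^2) := by rw [hsq]
      _ = |b - lam*β| := Real.sqrt_sq_eq_abs _
  rcases le_or_gt 0 (b - lam*β) with h | h
  · refine ⟨u, w, lam, hlam0, by rw [hu2]; ring, ?_, by rw [hw2]; ring⟩
    rw [abs_of_nonneg h] at h2uw; linarith
  · refine ⟨u, -w, lam, hlam0, by rw [hu2]; ring, ?_, by rw [neg_sq, hw2]; ring⟩
    rw [abs_of_neg h] at h2uw; nlinarith [h2uw]

/-- A nonneg polynomial with a root is divisible by the square of the root factor. -/
lemma sq_factor (F : Polynomial ℝ) (hpos : ∀ t, 0 ≤ F.eval t) (r : ℝ) (hr : F.eval r = 0) :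
    ∃ G, F = (X - C r)^2 * G := by
  obtain ⟨G1, hG1⟩ := (dvd_iff_isRoot.mpr hr : (X - C r) ∣ F)
  have hmin : IsLocalMin (fun t => F.eval t) r :=
    Filter.Eventually.of_forall (fun t => by simpa [hr] using hpos t)
  have hder : F.derivative.eval r = 0 := by
    have := hmin.deriv_eq_zero
    rwa [Polynomial.deriv] at this
  have hG1r : G1.eval r = 0 := by
    have : F.derivative = G1 + (X - C r) * G1.derivative := by
      rw [hG1]; simp [Polynomial.derivative_mul]
    rw [this] at hder; simpa using hder
  obtain ⟨G, hG⟩ := (dvd_iff_isRoot.mpr hG1r : (X - C r) ∣ G1)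
  exact ⟨G, by rw [hG1, hG]; ring⟩

/-- The cofactor of a square factor of a nonneg polynomial is nonneg. -/
lemma cofactor_nonneg (G : Polynomial ℝ) (r : ℝ)
    (h : ∀ t, 0 ≤ ((X - C r)^2 * G).eval t) : ∀ t, 0 ≤ G.eval t := by
  intro t
  by_contra hneg
  push_neg at hneg
  rcases eq_or_ne t r with rfl | hne
  · have hc : ContinuousAt (fun x => G.eval x) t := (Polynomial.continuous G).continuousAt
    rw [Metric.continuousAt_iff] at hc
    obtain ⟨δ, hδ, hball⟩ := hc (-G.eval t) (by linarith)
    have hd : dist (t + δ/2) t < δ := by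
      simp [Real.dist_eq]
      rw [abs_of_nonneg (by linarith)]; linarith
    have := hball hd
    rw [Real.dist_eq, abs_lt] at this
    have hGneg : G.eval (t + δ/2) < 0 := by linarith
    have h2 := h (t + δ/2)
    simp only [Polynomial.eval_mul, Polynomial.eval_pow, Polynomial.eval_sub,
      Polynomial.eval_X, Polynomial.eval_C] at h2
    have hp2 : (0:ℝ) < (t + δ/2 - t)^2 := by
      have he : t + δ/2 - t = δ/2 := by ring
      rw [he]; positivity
    nlinarith [mul_neg_of_pos_of_neg hp2 hGneg]
  · have h2 := h t
    simp only [Polynomial.eval_mul, Polynomial.eval_pow, Polynomial.eval_sub,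
      Polynomial.eval_X, Polynomial.eval_C] at h2
    have hp2 : (0:ℝ) < (t - r)^2 := pow_two_pos_of_ne_zero (sub_ne_zero.mpr hne)
    nlinarith [mul_neg_of_pos_of_neg hp2 hneg]

/-- A real polynomial of positive degree with no real root has a monic quadratic factor
which is positive everywhere. -/
lemma quadratic_factor (F : Polynomial ℝ) (hd : 1 ≤ F.natDegree)
    (hnoroot : ∀ t : ℝ, F.eval t ≠ 0) :
    ∃ b c : ℝ, (∀ t : ℝ, 0 < t^2 + b*t + c) ∧ (X^2 + C b * X + C c) ∣ F := by
  have hdeg : 0 < (F.map (algebraMap ℝ ℂ)).degree := by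
    rw [Polynomial.degree_map]
    exact natDegree_pos_iff_degree_pos.mp hd
  obtain ⟨z, hz⟩ := Complex.exists_root hdeg
  have him : z.im ≠ 0 := by
    intro h0
    apply hnoroot z.re
    have h1 : Polynomial.eval ((algebraMap ℝ ℂ) z.re) (F.map (algebraMap ℝ ℂ))
        = (algebraMap ℝ ℂ) (F.eval z.re) := by
      rw [Polynomial.eval_map, Polynomial.eval₂_at_apply]
    have hzre : (algebraMap ℝ ℂ) z.re = z := by
      apply Complex.ext <;> simp [h0]
    rw [hzre, hz.eq_zero] at h1
    have h2 : ((F.eval z.re : ℝ) : ℂ) = 0 := h1.symm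
    exact_mod_cast h2
  refine ⟨-2*z.re, z.re^2 + z.im^2,
    fun t => by nlinarith [sq_nonneg (t - z.re), pow_two_pos_of_ne_zero him], ?_⟩
  set P : Polynomial ℝ := X^2 + C (-2*z.re) * X + C (z.re^2 + z.im^2) with hP
  have hmonic : P.Monic := by
    rw [hP, add_assoc]
    apply Polynomial.monic_X_pow_add
    exact lt_of_le_of_lt Polynomial.degree_linear_le (by exact_mod_cast one_lt_two)
  have hPdeg : P.degree = 2 := by
    rw [hP]
    have h3 : (X^2 + C (-2*z.re) * X + C (z.re^2 + z.im^2) : Polynomial ℝ)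
        = C 1 * X^2 + C (-2*z.re) * X + C (z.re^2 + z.im^2) := by simp
    rw [h3]
    exact Polynomial.degree_quadratic one_ne_zero
  rw [← Polynomial.modByMonic_eq_zero_iff_dvd hmonic]
  have hdiv := Polynomial.modByMonic_add_div F P
  have hRdeg : (F %ₘ P).degree ≤ 1 := by
    by_cases hR0 : F %ₘ P = 0
    · simp [hR0]
    · have h4 := Polynomial.degree_modByMonic_lt F hmonic
      rw [hPdeg, Polynomial.degree_eq_natDegree hR0] at h4
      rw [Polynomial.degree_eq_natDegree hR0]
      have h5 : (F %ₘ P).natDegree < 2 := by exact_mod_cast h4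
      exact_mod_cast Nat.lt_succ_iff.mp h5
  have hR := Polynomial.eq_X_add_C_of_degree_le_one hRdeg
  -- evaluate the division identity at z over ℂ
  have hPz : Polynomial.eval z (P.map (algebraMap ℝ ℂ)) = 0 := by
    rw [hP]
    simp only [Polynomial.map_add, Polynomial.map_mul, Polynomial.map_pow,
      Polynomial.map_X, Polynomial.map_C, Polynomial.eval_add, Polynomial.eval_mul,
      Polynomial.eval_pow, Polynomial.eval_X, Polynomial.eval_C]
    rw [Complex.ext_iff]
    constructor <;>
      simp [Complex.add_re, Complex.add_im, Complex.mul_re, Complex.mul_im, pow_two] <;> ring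
  have hRz : Polynomial.eval z ((F %ₘ P).map (algebraMap ℝ ℂ)) = 0 := by
    have h6 : Polynomial.eval z (F.map (algebraMap ℝ ℂ)) = 0 := hz
    have h7 : (F %ₘ P).map (algebraMap ℝ ℂ) + (P.map (algebraMap ℝ ℂ)) * ((F /ₘ P).map (algebraMap ℝ ℂ)) = F.map (algebraMap ℝ ℂ) := by
      rw [← Polynomial.map_mul, ← Polynomial.map_add, hdiv]
    have h8 := congrArg (Polynomial.eval z) h7
    rw [Polynomial.eval_add, Polynomial.eval_mul, hPz, h6] at h8
    simpa using h8
  rw [hR] at hRz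
  simp only [Polynomial.map_add, Polynomial.map_mul, Polynomial.map_X, Polynomial.map_C,
    Polynomial.eval_add, Polynomial.eval_mul, Polynomial.eval_X, Polynomial.eval_C] at hRz
  rw [Complex.ext_iff] at hRz
  obtain ⟨hre, him2⟩ := hRz
  simp [Complex.add_re, Complex.add_im, Complex.mul_re, Complex.mul_im] at hre him2
  have ha : (F %ₘ P).coeff 1 = 0 := by
    rcases him2 with h | h
    · exact h
    · exact absurd h him
  have hb : (F %ₘ P).coeff 0 = 0 := by
    rw [ha] at hre; simpa using hre
  rw [hR, ha, hb]
  simp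

lemma quad_poly (Q : Polynomial ℝ) (hQdeg : Q.natDegree ≤ 2) (hQpos : ∀ t, 0 < Q.eval t)
    (hQ2 : 0 < Q.coeff 2) (b c : ℝ) (hP : ∀ t : ℝ, 0 ≤ t^2 + b*t + c) :
    ∃ (L : Polynomial ℝ) (lam : ℝ), L.natDegree ≤ 1 ∧ 0 ≤ lam ∧
      X^2 + C b * X + C c = L^2 + C lam * Q := by
  have hQrepr : Q = C (Q.coeff 2) * X^2 + C (Q.coeff 1) * X + C (Q.coeff 0) := by
    ext n
    match n with
    | 0 => simp [Polynomial.coeff_C_mul, Polynomial.coeff_X_pow, Polynomial.coeff_C]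
    | 1 => simp [Polynomial.coeff_C_mul, Polynomial.coeff_X_pow, Polynomial.coeff_C]
    | 2 => simp [Polynomial.coeff_C_mul, Polynomial.coeff_X_pow, Polynomial.coeff_C]
    | (n+3) =>
      rw [Polynomial.coeff_eq_zero_of_natDegree_lt (lt_of_le_of_lt hQdeg (by omega))]
      simp [Polynomial.coeff_C_mul, Polynomial.coeff_X_pow, Polynomial.coeff_C]
  have hevalQ : ∀ t, Q.eval t = Q.coeff 2 * t^2 + Q.coeff 1 * t + Q.coeff 0 := by
    intro t
    conv_lhs => rw [hQrepr]
    simp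
  obtain ⟨u, v, lam, hlam0, e1, e2, e3⟩ := quad_scalar (Q.coeff 2) (Q.coeff 1) (Q.coeff 0) b c
    hQ2 (fun t => by rw [← hevalQ]; exact hQpos t) hP
  refine ⟨C u * X + C v, lam, Polynomial.natDegree_linear_le, hlam0, ?_⟩
  conv_rhs => rw [hQrepr]
  have hexp : (C u * X + C v)^2 + C lam * (C (Q.coeff 2) * X^2 + C (Q.coeff 1) * X + C (Q.coeff 0))
      = C (u^2 + lam*Q.coeff 2) * X^2 + C (2*u*v + lam*Q.coeff 1) * X + C (v^2 + lam*Q.coeff 0) := by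
    simp only [Polynomial.C_add, Polynomial.C_mul, Polynomial.C_pow, map_ofNat]
    ring
  rw [hexp, e1, e2, e3]
  simp

lemma onevar (Q : Polynomial ℝ) (hQdeg : Q.natDegree ≤ 2) (hQpos : ∀ t, 0 < Q.eval t)
    (hQ2 : 0 < Q.coeff 2) :
    ∀ d : ℕ, ∀ F : Polynomial ℝ, F.natDegree ≤ 2*d → (∀ t, 0 ≤ F.eval t) →
    ∃ H Ξ : Polynomial ℝ, H.natDegree ≤ d ∧ (Ξ = 0 ∨ Ξ.natDegree + 1 ≤ d) ∧
      F = H^2 + Q * Ξ^2 := by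
  intro d
  induction d with
  | zero =>
    intro F hdeg hpos
    have hF : F = C (F.coeff 0) := Polynomial.eq_C_of_natDegree_le_zero (by omega)
    have hc : 0 ≤ F.coeff 0 := by have := hpos 0; rwa [hF, Polynomial.eval_C] at this
    refine ⟨C (Real.sqrt (F.coeff 0)), 0, by simp, Or.inl rfl, ?_⟩
    have hCsq : (C (Real.sqrt (F.coeff 0)))^2 = C (F.coeff 0) := by
      rw [← Polynomial.C_pow, Real.sq_sqrt hc]
    rw [hCsq]
    simpa using hF
  | succ d ih =>
    intro F hdeg hpos
    by_cases hF0 : F = 0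
    · exact ⟨0, 0, by simp, Or.inl rfl, by simp [hF0]⟩
    by_cases hroot : ∃ r, F.eval r = 0
    · obtain ⟨r, hr⟩ := hroot
      obtain ⟨G, hG⟩ := sq_factor F hpos r hr
      have hGpos : ∀ t, 0 ≤ G.eval t := cofactor_nonneg G r (fun t => hG ▸ hpos t)
      have hGne : G ≠ 0 := fun h => hF0 (by rw [hG, h, mul_zero])
      have hXrne : ((X - C r)^2 : Polynomial ℝ) ≠ 0 := by
        apply pow_ne_zero; exact Polynomial.X_sub_C_ne_zero r
      have hdegG : G.natDegree ≤ 2*d := by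
        have h1 : F.natDegree = 2 + G.natDegree := by
          rw [hG, Polynomial.natDegree_mul hXrne hGne]
          congr 1
          rw [Polynomial.natDegree_pow, Polynomial.natDegree_X_sub_C]
        omega
      obtain ⟨H1, Ξ1, hH1, hΞ1, hrep⟩ := ih G hdegG hGpos
      refine ⟨(X - C r) * H1, (X - C r) * Ξ1, ?_, ?_, ?_⟩
      · calc ((X - C r) * H1).natDegree ≤ (X - C r).natDegree + H1.natDegree :=
            Polynomial.natDegree_mul_le
          _ ≤ d + 1 := by rw [Polynomial.natDegree_X_sub_C]; omega
      · rcases hΞ1 with h | h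
        · exact Or.inl (by rw [h, mul_zero])
        · refine Or.inr ?_
          have : ((X - C r) * Ξ1).natDegree ≤ 1 + Ξ1.natDegree := by
            calc ((X - C r) * Ξ1).natDegree ≤ (X - C r).natDegree + Ξ1.natDegree :=
              Polynomial.natDegree_mul_le
            _ = 1 + Ξ1.natDegree := by rw [Polynomial.natDegree_X_sub_C]
          omega
      · rw [hG, hrep]; ring
    · push_neg at hroot
      have hFpos : ∀ t, 0 < F.eval t := fun t => lt_of_le_of_ne (hpos t) (Ne.symm (hroot t))
      by_cases hdeg' : F.natDegree ≤ 2*d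
      · obtain ⟨H1, Ξ1, hH1, hΞ1, hrep⟩ := ih F hdeg' hpos
        refine ⟨H1, Ξ1, by omega, ?_, hrep⟩
        rcases hΞ1 with h | h
        · exact Or.inl h
        · exact Or.inr (by omega)
      · push_neg at hdeg'
        obtain ⟨b, c, hbc, hdvd⟩ := quadratic_factor F (by omega) hroot
        obtain ⟨G, hG⟩ := hdvd
        set P : Polynomial ℝ := X^2 + C b * X + C c with hP
        have hPpos : ∀ t, 0 < P.eval t := by
          intro t; rw [hP]; simpa using hbc t
        have hGpos : ∀ t, 0 ≤ G.eval t := by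
          intro t
          have h1 := hpos t
          rw [hG, Polynomial.eval_mul] at h1
          nlinarith [hPpos t, h1]
        have hGne : G ≠ 0 := fun h => hF0 (by rw [hG, h, mul_zero])
        have hPne : P ≠ 0 := fun h => by
          have := hPpos 0; rw [h] at this; simp at this
        have hPdeg : P.natDegree = 2 := by
          rw [hP]
          have h3 : (X^2 + C b * X + C c : Polynomial ℝ)
              = C 1 * X^2 + C b * X + C c := by simp
          rw [h3]
          exact Polynomial.natDegree_quadratic one_ne_zero
        have hdegG : G.natDegree ≤ 2*d := by
          have h1 : F.natDegree = 2 + G.natDegree := by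
            rw [hG, Polynomial.natDegree_mul hPne hGne, hPdeg]
          omega
        obtain ⟨H1, Ξ1, hH1, hΞ1, hrep⟩ := ih G hdegG hGpos
        obtain ⟨L, lam, hLdeg, hlam0, hPrep⟩ := quad_poly Q hQdeg hQpos hQ2 b c
          (fun t => le_of_lt (hbc t))
        set sl := Real.sqrt lam with hsl
        have hC : (C sl)^2 = C lam := by
          rw [← Polynomial.C_pow, Real.sq_sqrt hlam0]
        refine ⟨L * H1 - C sl * Q * Ξ1, L * Ξ1 + C sl * H1, ?_, ?_, ?_⟩
        · apply le_trans (Polynomial.natDegree_sub_le _ _)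
          apply max_le
          · exact le_trans Polynomial.natDegree_mul_le (by omega)
          · rcases hΞ1 with h | h
            · simp [h]
            · apply le_trans Polynomial.natDegree_mul_le
              have : (C sl * Q).natDegree ≤ 2 :=
                le_trans Polynomial.natDegree_mul_le (by simp [hQdeg])
              omega
        · refine Or.inr ?_
          have hb : (L * Ξ1 + C sl * H1).natDegree ≤ d := by
            apply le_trans (Polynomial.natDegree_add_le _ _)
            apply max_le
            · rcases hΞ1 with h | h
              · simp [h]
              · exact le_trans Polynomial.natDegree_mul_le (by omega)
            · exact le_trans Polynomial.natDegree_mul_le (by simp; omega)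
          omega
        · rw [hG, hrep, hP, hPrep, ← hC]
          ring

end OneVar

open MvPolynomial

noncomputable def toForm (n : ℕ) (F : Polynomial ℝ) : MvPolynomial (Fin 2) ℝ :=
  ∑ k ∈ Finset.range (n+1), MvPolynomial.C (F.coeff k) * (X 0)^k * (X 1)^(n-k)

lemma toForm_isHomogeneous (n : ℕ) (F : Polynomial ℝ) : (toForm n F).IsHomogeneous n := by
  apply MvPolynomial.IsHomogeneous.sum
  intro k hk
  rw [Finset.mem_range] at hk
  have h1 : (MvPolynomial.C (F.coeff k) * (X 0 : MvPolynomial (Fin 2) ℝ)^k * (X 1)^(n-k)).IsHomogeneous (0 + k + (n-k)) :=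
    ((isHomogeneous_C _ _).mul (isHomogeneous_X_pow _ _)).mul (isHomogeneous_X_pow _ _)
  have h2 : 0 + k + (n-k) = n := by omega
  rwa [h2] at h1

lemma toForm_eval (n : ℕ) (F : Polynomial ℝ) (hF : F.natDegree ≤ n) (v : Fin 2 → ℝ) (hv : v 1 ≠ 0) :
    eval v (toForm n F) = (v 1)^n * F.eval (v 0 / v 1) := by
  rw [toForm, map_sum]
  rw [Polynomial.eval_eq_sum_range' (lt_of_le_of_lt hF (Nat.lt_succ_self n)), Finset.mul_sum]
  apply Finset.sum_congr rfl
  intro k hk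
  rw [Finset.mem_range] at hk
  simp only [map_mul, map_pow, eval_C, eval_X]
  rw [div_pow]
  field_simp
  rw [mul_assoc (F.coeff k * v 0 ^ k), ← pow_add, show n - k + k = n by omega]

lemma hom_degree_eq {p : MvPolynomial (Fin 2) ℝ} {n : ℕ} (hp : p.IsHomogeneous n)
    {m : Fin 2 →₀ ℕ} (hm : m ∈ p.support) : m 0 + m 1 = n := by
  have h := hp (MvPolynomial.mem_support_iff.mp hm)
  rw [← h]
  rw [Finsupp.weight_apply, Finsupp.sum_fintype]
  · simp [Fin.sum_univ_two, mul_comm]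
  · intro i; simp

lemma eval_dehom (p : MvPolynomial (Fin 2) ℝ) (t : ℝ) :
    (MvPolynomial.aeval ![Polynomial.X, (1 : Polynomial ℝ)] p).eval t = eval ![t, 1] p := by
  induction p using MvPolynomial.induction_on with
  | C a => simp
  | add p q hp hq => simp [hp, hq]
  | mul_X p i hp => fin_cases i <;> simp [hp]

lemma dehom_natDegree {p : MvPolynomial (Fin 2) ℝ} {n : ℕ} (hp : p.IsHomogeneous n) :
    (MvPolynomial.aeval ![Polynomial.X, (1 : Polynomial ℝ)] p).natDegree ≤ n := by
  conv_lhs => rw [← MvPolynomial.support_sum_monomial_coeff p]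
  rw [map_sum]
  apply Polynomial.natDegree_sum_le_of_forall_le
  intro m hm
  rw [MvPolynomial.aeval_monomial]
  apply le_trans Polynomial.natDegree_mul_le
  have h1 : (m.prod fun i k => (![Polynomial.X, (1 : Polynomial ℝ)] i) ^ k)
      = Polynomial.X ^ (m 0) * 1 ^ (m 1) := by
    rw [Finsupp.prod_fintype]
    · simp [Fin.prod_univ_two]
    · intro i; simp
  rw [h1]
  have h2 := hom_degree_eq hp hm
  simp
  omega

lemma dehom_coeff_top {p : MvPolynomial (Fin 2) ℝ} {n : ℕ} (hp : p.IsHomogeneous n) :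
    (MvPolynomial.aeval ![Polynomial.X, (1 : Polynomial ℝ)] p).coeff n = eval ![1, 0] p := by
  conv_lhs => rw [← MvPolynomial.support_sum_monomial_coeff p]
  conv_rhs => rw [← MvPolynomial.support_sum_monomial_coeff p]
  rw [map_sum, map_sum, Polynomial.finset_sum_coeff]
  apply Finset.sum_congr rfl
  intro m hm
  have h2 := hom_degree_eq hp hm
  rw [MvPolynomial.aeval_monomial, MvPolynomial.eval_monomial]
  have h1 : (m.prod fun i k => (![Polynomial.X, (1 : Polynomial ℝ)] i) ^ k)
      = Polynomial.X ^ (m 0) * 1 ^ (m 1) := by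
    rw [Finsupp.prod_fintype]
    · simp [Fin.prod_univ_two]
    · intro i; simp
  have h3 : (m.prod fun i k => (![(1:ℝ), 0] i) ^ k) = 1 ^ (m 0) * 0 ^ (m 1) := by
    rw [Finsupp.prod_fintype]
    · simp [Fin.prod_univ_two]
    · intro i; simp
  rw [h1, h3]
  by_cases hm1 : m 1 = 0
  · have hm0 : m 0 = n := by omega
    simp [hm0, hm1]
  · have hm0 : m 0 ≠ n := by omega
    rw [zero_pow hm1]
    simp [Polynomial.coeff_C_mul, Polynomial.coeff_X_pow, hm0]
    intro h
    exact absurd h.symm hm0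

lemma hom_eval_scale {p : MvPolynomial (Fin 2) ℝ} {n : ℕ} (hp : p.IsHomogeneous n)
    (c : ℝ) (w : Fin 2 → ℝ) :
    eval (fun i => c * w i) p = c^n * eval w p := by
  conv_lhs => rw [← MvPolynomial.support_sum_monomial_coeff p]
  conv_rhs => rw [← MvPolynomial.support_sum_monomial_coeff p]
  rw [map_sum, map_sum, Finset.mul_sum]
  apply Finset.sum_congr rfl
  intro m hm
  have h2 := hom_degree_eq hp hm
  rw [MvPolynomial.eval_monomial, MvPolynomial.eval_monomial]
  have h1 : (m.prod fun i k => (c * w i) ^ k) = (c*w 0)^(m 0) * (c*w 1)^(m 1) := by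
    rw [Finsupp.prod_fintype]
    · simp [Fin.prod_univ_two]
    · intro i; simp
  have h3 : (m.prod fun i k => (w i) ^ k) = (w 0)^(m 0) * (w 1)^(m 1) := by
    rw [Finsupp.prod_fintype]
    · simp [Fin.prod_univ_two]
    · intro i; simp
  rw [h1, h3, mul_pow, mul_pow, ← h2, pow_add]
  ring

theorem stmt_4 (d : ℕ) (q f : MvPolynomial (Fin 2) ℝ)
    (hq : q.IsHomogeneous 2) (hqpos : ∀ v : Fin 2 → ℝ, v ≠ 0 → 0 < eval v q)
    (hf : f.IsHomogeneous (2 * d)) (hfpsd : ∀ v : Fin 2 → ℝ, 0 ≤ eval v f) :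
    ∃ ξ η : MvPolynomial (Fin 2) ℝ, ξ.IsHomogeneous (d - 1) ∧ η.IsHomogeneous d ∧
      f = η ^ 2 + q * ξ ^ 2 := by
  have hQdeg := dehom_natDegree hq
  have hQpos : ∀ t : ℝ, 0 < (MvPolynomial.aeval ![Polynomial.X, (1 : Polynomial ℝ)] q).eval t := by
    intro t
    rw [eval_dehom]
    apply hqpos
    intro h0
    simpa using congrFun h0 1
  have hQ2 : 0 < (MvPolynomial.aeval ![Polynomial.X, (1 : Polynomial ℝ)] q).coeff 2 := by
    rw [dehom_coeff_top hq]
    apply hqpos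
    intro h0
    simpa using congrFun h0 0
  have hFdeg := dehom_natDegree hf
  have hFpos : ∀ t : ℝ, 0 ≤ (MvPolynomial.aeval ![Polynomial.X, (1 : Polynomial ℝ)] f).eval t := by
    intro t; rw [eval_dehom]; apply hfpsd
  obtain ⟨H, Ξ, hH, hΞ, hrep⟩ := onevar _ hQdeg hQpos hQ2 d _ hFdeg hFpos
  have hΞdeg : Ξ.natDegree ≤ d - 1 := by
    rcases hΞ with h | h
    · simp [h]
    · omega
  refine ⟨toForm (d-1) Ξ, toForm d H, toForm_isHomogeneous _ _, toForm_isHomogeneous _ _, ?_⟩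
  have key : ∀ v : Fin 2 → ℝ, v 1 ≠ 0 →
      eval v f = eval v (toForm d H ^ 2 + q * toForm (d-1) Ξ ^ 2) := by
    intro v hv
    have hveq : v = fun i => (v 1) * (![v 0 / v 1, 1] i) := by
      funext i
      fin_cases i
      · simp; field_simp
      · simp
    have hfv : eval v f = (v 1)^(2*d) * Polynomial.eval (v 0 / v 1)
        (MvPolynomial.aeval ![Polynomial.X, (1 : Polynomial ℝ)] f) := by
      conv_lhs => rw [hveq]
      rw [hom_eval_scale hf, eval_dehom]
    have hqv : eval v q = (v 1)^2 * Polynomial.eval (v 0 / v 1)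
        (MvPolynomial.aeval ![Polynomial.X, (1 : Polynomial ℝ)] q) := by
      conv_lhs => rw [hveq]
      rw [hom_eval_scale hq, eval_dehom]
    rw [map_add, map_mul, map_pow, map_pow]
    rw [toForm_eval d H hH v hv, toForm_eval (d-1) Ξ hΞdeg v hv]
    rw [hfv, hqv, hrep]
    simp only [Polynomial.eval_add, Polynomial.eval_mul, Polynomial.eval_pow]
    rcases hΞ with h0 | hd1
    · rw [h0]
      simp only [Polynomial.eval_zero]
      rw [mul_pow, ← pow_mul]
      ring
    · have e1 : (v 1)^(d*2) = (v 1)^(2*d) := by rw [Nat.mul_comm]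
      have e2 : (v 1)^2 * (v 1)^((d-1)*2) = (v 1)^(2*d) := by
        rw [← pow_add]; congr 1; omega
      rw [mul_pow, mul_pow, ← pow_mul, ← pow_mul]
      linear_combination (-(Polynomial.eval (v 0 / v 1) H ^ 2)) * e1 -
        (Polynomial.eval (v 0 / v 1) ((MvPolynomial.aeval ![Polynomial.X, (1 : Polynomial ℝ)]) q)
          * Polynomial.eval (v 0 / v 1) Ξ ^ 2) * e2
  have hmul : (X 1 : MvPolynomial (Fin 2) ℝ) * f
      = X 1 * (toForm d H ^ 2 + q * toForm (d-1) Ξ ^ 2) := by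
    apply MvPolynomial.funext
    intro v
    rw [map_mul, map_mul, eval_X]
    by_cases hv : v 1 = 0
    · rw [hv]; ring
    · rw [key v hv]
  exact mul_left_cancel₀ (MvPolynomial.X_ne_zero 1) hmul
end

section
/- Let f(x,y,z) = f₂(x,y)z² + f₃(x,y)z + f₄(x,y), where fⱼ ∈ ℝ[x,y] is a binary form of degree j for j = 2,3,4. Then f is positive semidefinite on ℝ³ if and only if each of the three binary forms f₂, f₄, and 4f₂f₄ − f₃² is positive semidefinite on ℝ². -/
open MvPolynomial

lemma quad_nonneg_iff (a b c : ℝ) :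
    (∀ z : ℝ, 0 ≤ a * z ^ 2 + b * z + c) ↔ (0 ≤ a ∧ 0 ≤ c ∧ 0 ≤ 4 * a * c - b ^ 2) := by
  constructor
  · intro H
    have hd : discrim a b c ≤ 0 := discrim_le_zero (fun x => by simpa [sq] using H x)
    rw [discrim] at hd
    have hc : (0:ℝ) ≤ c := by have := H 0; nlinarith
    have ha : (0:ℝ) ≤ a := by
      by_contra h
      push_neg at h
      have hb2 : b ^ 2 ≤ 0 := by nlinarith
      have hb : b = 0 := by nlinarith [sq_nonneg b]
      have hc0 : c = 0 := by nlinarith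
      have := H 1
      nlinarith
    exact ⟨ha, hc, by nlinarith⟩
  · rintro ⟨ha, hc, hd⟩ z
    rcases eq_or_lt_of_le ha with h0 | h0
    · have hb : b = 0 := by nlinarith [sq_nonneg b]
      simp [← h0, hb, hc]
    · nlinarith [sq_nonneg (2 * a * z + b)]

theorem stmt_5 (f₂ f₃ f₄ : MvPolynomial (Fin 2) ℝ)
    (h2 : f₂.IsHomogeneous 2) (h3 : f₃.IsHomogeneous 3) (h4 : f₄.IsHomogeneous 4) :
    (∀ x y z : ℝ,
        0 ≤ eval ![x, y] f₂ * z ^ 2 + eval ![x, y] f₃ * z + eval ![x, y] f₄) ↔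
      ((∀ v : Fin 2 → ℝ, 0 ≤ eval v f₂) ∧ (∀ v : Fin 2 → ℝ, 0 ≤ eval v f₄) ∧
        (∀ v : Fin 2 → ℝ, 0 ≤ eval v (4 * f₂ * f₄ - f₃ ^ 2))) := by
  have key : ∀ v : Fin 2 → ℝ, eval v (4 * f₂ * f₄ - f₃ ^ 2)
      = 4 * eval v f₂ * eval v f₄ - (eval v f₃) ^ 2 := by
    intro v; simp [mul_assoc]
  have hv : ∀ v : Fin 2 → ℝ, ![v 0, v 1] = v := by
    intro v; funext i; fin_cases i <;> rfl
  constructor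
  · intro H
    refine ⟨fun v => ?_, fun v => ?_, fun v => ?_⟩
    · exact ((quad_nonneg_iff _ _ _).1 (by rw [← hv v] at *; exact H (v 0) (v 1))).1
    · exact ((quad_nonneg_iff _ _ _).1 (by rw [← hv v] at *; exact H (v 0) (v 1))).2.1
    · rw [key]
      exact ((quad_nonneg_iff _ _ _).1 (by rw [← hv v] at *; exact H (v 0) (v 1))).2.2
  · rintro ⟨ha, hc, hd⟩ x y z
    refine (quad_nonneg_iff _ _ _).2 ⟨ha _, hc _, ?_⟩ z
    have := hd ![x, y]
    rwa [key] at this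
end

section
/- A positive semidefinite binary form f ∈ ℝ[x,y] of even degree is a sum of two squares of real binary forms. -/
section UnivariateAux
open Polynomial

lemma aux_nonneg_of_cofinite (g : ℝ[X]) (S : Set ℝ) (hS : S.Finite)
    (h : ∀ x ∉ S, 0 ≤ g.eval x) : ∀ x, 0 ≤ g.eval x := by
  have hd : Dense Sᶜ := hS.countable.dense_compl ℝ
  have hcl : IsClosed {x : ℝ | 0 ≤ g.eval x} :=
    isClosed_le continuous_const g.continuous
  intro x
  have hsub : (Sᶜ : Set ℝ) ⊆ {x | 0 ≤ g.eval x} := fun y hy => h y hy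
  have := hcl.closure_subset_iff.mpr hsub
  rw [hd.closure_eq] at this
  exact this (Set.mem_univ x)

lemma aux_sum_two_squares : ∀ (n : ℕ) (f : ℝ[X]), f.natDegree ≤ n →
    (∀ x, 0 ≤ f.eval x) →
    ∃ a b : ℝ[X], f = a ^ 2 + b ^ 2 ∧ 2 * a.natDegree ≤ f.natDegree ∧
      2 * b.natDegree ≤ f.natDegree := by
  intro n
  induction n using Nat.strong_induction_on with
  | _ n ih =>
    intro f hdeg hpos
    by_cases hf0 : f = 0
    · exact ⟨0, 0, by simp [hf0], by simp, by simp⟩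
    by_cases hdeg0 : f.natDegree = 0
    · have hc : f = C (f.coeff 0) := f.eq_C_of_natDegree_eq_zero hdeg0
      have hc0 : 0 ≤ f.coeff 0 := by
        have := hpos 0
        rw [hc] at this; simpa using this
      refine ⟨C (Real.sqrt (f.coeff 0)), 0, ?_, by simp [hdeg0], by simp⟩
      conv_lhs => rw [hc]
      rw [← C_pow, Real.sq_sqrt hc0]
      simp
    -- degree ≥ 1 case
    have hdegpos : 0 < f.degree := by
      rw [← natDegree_pos_iff_degree_pos]
      omega
    obtain ⟨z, hz⟩ := Complex.exists_root (f := f.map (algebraMap ℝ ℂ)) (by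
      rwa [degree_map_eq_of_injective (algebraMap ℝ ℂ).injective])
    -- produce w e with ((X - C w)^2 + C e^2) ∣ f
    obtain ⟨w, e, hdvd⟩ : ∃ w e : ℝ, ((X - C w) ^ 2 + C e ^ 2) ∣ f := by
      by_cases him : z.im = 0
      · -- real root
        refine ⟨z.re, 0, ?_⟩
        have hzre : z = (z.re : ℂ) := by
          apply Complex.ext <;> simp [him]
        have hroot : f.IsRoot z.re := by
          have : (f.map (algebraMap ℝ ℂ)).eval ((z.re : ℂ)) = 0 := by
            rw [← hzre]; exact hz
          rw [eval_map] at this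
          have h2 : (algebraMap ℝ ℂ) (f.eval z.re) = 0 := by
            rw [← this]; exact (eval₂_at_apply _ _).symm
          exact (map_eq_zero_iff _ (algebraMap ℝ ℂ).injective).mp h2
        have hmin : IsLocalMin (fun x => f.eval x) z.re := by
          apply Filter.Eventually.of_forall
          intro x
          simpa [hroot.eq_zero] using hpos x
        have hderiv : f.derivative.IsRoot z.re := by
          have := hmin.deriv_eq_zero
          rwa [Polynomial.deriv] at this
        have hlt : 1 < f.rootMultiplicity z.re :=
          (one_lt_rootMultiplicity_iff_isRoot hf0).mpr ⟨hroot, hderiv⟩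
        have : (X - C z.re) ^ 2 ∣ f :=
          dvd_trans (pow_dvd_pow _ hlt) (f.pow_rootMultiplicity_dvd z.re)
        simpa using this
      · -- complex root
        refine ⟨z.re, z.im, ?_⟩
        have hconj : (f.map (algebraMap ℝ ℂ)).IsRoot ((starRingEnd ℂ) z) := by
          have h1 : (f.map (algebraMap ℝ ℂ)).map (starRingEnd ℂ) =
              f.map (algebraMap ℝ ℂ) := by
            rw [map_map]
            congr 1
            ext r
            simp [Complex.conj_ofReal]
          have : ((f.map (algebraMap ℝ ℂ)).map (starRingEnd ℂ)).eval
              ((starRingEnd ℂ) z) = (starRingEnd ℂ) ((f.map (algebraMap ℝ ℂ)).eval z) := by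
            rw [eval_map, eval₂_at_apply]
          rw [h1] at this
          rw [IsRoot, this, hz, map_zero]
        have hne : z ≠ (starRingEnd ℂ) z := by
          intro h
          apply him
          have := Complex.conj_eq_iff_im.mp h.symm
          exact this
        have hcop : IsCoprime (X - C z) (X - C ((starRingEnd ℂ) z)) :=
          isCoprime_X_sub_C_of_isUnit_sub (by
            rw [isUnit_iff_ne_zero, sub_ne_zero]; exact hne)
        have hdvd2 : (X - C z) * (X - C ((starRingEnd ℂ) z)) ∣ f.map (algebraMap ℝ ℂ) :=
          hcop.mul_dvd (dvd_iff_isRoot.mpr hz) (dvd_iff_isRoot.mpr hconj)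
        have hmapeq : ((X - C z.re) ^ 2 + C z.im ^ 2 : ℝ[X]).map (algebraMap ℝ ℂ) =
            (X - C z) * (X - C ((starRingEnd ℂ) z)) := by
          have h1c : C z + C ((starRingEnd ℂ) z) = 2 * C ((z.re : ℂ)) := by
            rw [← map_add, Complex.add_conj]
            have : ((2 * z.re : ℝ) : ℂ) = 2 * (z.re : ℂ) := by push_cast; ring
            rw [this, map_mul, map_ofNat]
          have h2c : C z * C ((starRingEnd ℂ) z) =
              C ((z.re : ℂ)) ^ 2 + C ((z.im : ℂ)) ^ 2 := by
            rw [← map_mul, Complex.mul_conj]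
            have : (Complex.normSq z : ℂ) = (z.re : ℂ) ^ 2 + (z.im : ℂ) ^ 2 := by
              rw [Complex.normSq_apply]; push_cast; ring
            rw [this, map_add, ← C_pow, ← C_pow]
          rw [Polynomial.map_add, Polynomial.map_pow, Polynomial.map_pow,
            Polynomial.map_sub, map_X, map_C, map_C]
          have : (algebraMap ℝ ℂ) z.re = (z.re : ℂ) := rfl
          rw [this]
          have : (algebraMap ℝ ℂ) z.im = (z.im : ℂ) := rfl
          rw [this]
          linear_combination (Polynomial.X : ℂ[X]) * h1c - h2c
        rw [← hmapeq] at hdvd2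
        exact (map_dvd_map' (algebraMap ℝ ℂ)).mp hdvd2
    obtain ⟨g, hg⟩ := hdvd
    set s : ℝ[X] := (X - C w) ^ 2 + C e ^ 2 with hs
    have hsev : ∀ x, s.eval x = (x - w) ^ 2 + e ^ 2 := by intro x; simp [hs]
    have hg0 : g ≠ 0 := by rintro rfl; rw [mul_zero] at hg; exact hf0 hg
    have hs2 : s.natDegree = 2 := by
      rw [hs]; compute_degree!
    have hsne : s ≠ 0 := fun h => by simp [h] at hs2
    have hdegf : f.natDegree = 2 + g.natDegree := by
      rw [hg, natDegree_mul hsne hg0, hs2]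
    have hgpos : ∀ x, 0 ≤ g.eval x := by
      apply aux_nonneg_of_cofinite g {w} (Set.finite_singleton w)
      intro x hx
      have hsx : 0 < s.eval x := by
        rw [hsev]
        have hne : x ≠ w := by simpa using hx
        have h1 : 0 < (x - w) ^ 2 :=
          lt_of_le_of_ne (sq_nonneg _) (Ne.symm (pow_ne_zero 2 (sub_ne_zero.mpr hne)))
        nlinarith [sq_nonneg e]
      have hfx := hpos x
      rw [hg, eval_mul] at hfx
      nlinarith
    have hglt : g.natDegree < n := by omega
    obtain ⟨a, b, hab, hda, hdb⟩ := ih g.natDegree hglt g le_rfl hgpos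
    refine ⟨(X - C w) * a - C e * b, (X - C w) * b + C e * a, ?_, ?_, ?_⟩
    · rw [hg, hab, hs]; ring
    · have h1 : ((X - C w) * a - C e * b).natDegree ≤
          max ((X - C w) * a).natDegree ((C e * b).natDegree) := natDegree_sub_le _ _
      have h2 : ((X - C w) * a).natDegree ≤ (X - C w).natDegree + a.natDegree :=
        natDegree_mul_le
      have h3 : ((C e) * b).natDegree ≤ (C e).natDegree + b.natDegree := natDegree_mul_le
      have h4 : (X - C w).natDegree = 1 := natDegree_X_sub_C w
      have h5 : (C e : ℝ[X]).natDegree = 0 := natDegree_C e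
      omega
    · have h1 : ((X - C w) * b + C e * a).natDegree ≤
          max ((X - C w) * b).natDegree ((C e * a).natDegree) := natDegree_add_le _ _
      have h2 : ((X - C w) * b).natDegree ≤ (X - C w).natDegree + b.natDegree :=
        natDegree_mul_le
      have h3 : ((C e) * a).natDegree ≤ (C e).natDegree + a.natDegree := natDegree_mul_le
      have h4 : (X - C w).natDegree = 1 := natDegree_X_sub_C w
      have h5 : (C e : ℝ[X]).natDegree = 0 := natDegree_C e
      omega
end UnivariateAux


noncomputable def auxDehom (f : MvPolynomial (Fin 2) ℝ) : Polynomial ℝ :=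
  MvPolynomial.aeval ![Polynomial.X, 1] f

lemma aux_mv_aeval_eq_eval (v : Fin 2 → ℝ) (f : MvPolynomial (Fin 2) ℝ) :
    MvPolynomial.aeval v f = MvPolynomial.eval v f := rfl

lemma auxDehom_eval (f : MvPolynomial (Fin 2) ℝ) (x : ℝ) :
    (auxDehom f).eval x = MvPolynomial.eval ![x, 1] f := by
  have h := MvPolynomial.comp_aeval_apply (Polynomial.aeval x : Polynomial ℝ →ₐ[ℝ] ℝ)
      (f := ![Polynomial.X, 1]) f
  have h2 : (fun i => (Polynomial.aeval x : Polynomial ℝ →ₐ[ℝ] ℝ) (![Polynomial.X, 1] i))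
      = ![x, 1] := by
    funext i
    fin_cases i <;> simp
  rw [h2] at h
  have h3 : (Polynomial.aeval x : Polynomial ℝ →ₐ[ℝ] ℝ) (auxDehom f)
      = (auxDehom f).eval x := by
    rw [← Polynomial.coe_aeval_eq_eval]
  rw [← h3, auxDehom, h, aux_mv_aeval_eq_eval]

lemma auxDehom_natDegree_le (f : MvPolynomial (Fin 2) ℝ) {n : ℕ}
    (hf : f.IsHomogeneous n) : (auxDehom f).natDegree ≤ n := by
  have h := MvPolynomial.aeval_natDegree_le (m := n) (n := 1) f hf.totalDegree_le
      ![Polynomial.X, 1] ?_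
  · simpa [auxDehom] using h
  · intro i
    fin_cases i <;> simp

lemma aux_degree_eq_sum {m : Fin 2 →₀ ℕ} : Finsupp.degree m = m 0 + m 1 := by
  show ∑ i ∈ m.support, m i = m 0 + m 1
  rw [Finset.sum_subset (Finset.subset_univ m.support)]
  · rw [Fin.sum_univ_two]
  · intro x _ hx
    simpa using hx

lemma aux_scale (f : MvPolynomial (Fin 2) ℝ) {n : ℕ} (hf : f.IsHomogeneous n)
    (c : ℝ) (v : Fin 2 → ℝ) :
    MvPolynomial.eval (fun i => c * v i) f = c ^ n * MvPolynomial.eval v f := by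
  rw [MvPolynomial.eval_eq, MvPolynomial.eval_eq, Finset.mul_sum]
  apply Finset.sum_congr rfl
  intro m hm
  have hdeg : m 0 + m 1 = n := by
    have h1 := hf (MvPolynomial.mem_support_iff.mp hm)
    rw [← aux_degree_eq_sum, Finsupp.degree_eq_weight_one]
    exact h1
  have hprod : ∀ w : Fin 2 → ℝ, ∏ i ∈ m.support, w i ^ m i = w 0 ^ m 0 * w 1 ^ m 1 := by
    intro w
    rw [Finset.prod_subset (Finset.subset_univ m.support)
      (fun x _ hx => by simp [Finsupp.notMem_support_iff.mp hx])]
    exact Fin.prod_univ_two _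
  rw [hprod, hprod, mul_pow, mul_pow, ← hdeg, pow_add]
  ring

lemma aux_homog_ext {n : ℕ} {f g : MvPolynomial (Fin 2) ℝ}
    (hf : f.IsHomogeneous n) (hg : g.IsHomogeneous n)
    (h : ∀ x : ℝ, MvPolynomial.eval ![x, 1] f = MvPolynomial.eval ![x, 1] g) : f = g := by
  apply MvPolynomial.funext
  intro v
  have key : ∀ (x t : ℝ), t ≠ 0 →
      MvPolynomial.eval ![x, t] f = MvPolynomial.eval ![x, t] g := by
    intro x t ht
    have hv : ![x, t] = fun i => t * ![x / t, 1] i := by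
      funext i
      fin_cases i
      · simp only [Fin.zero_eta, Matrix.cons_val_zero]
        field_simp
      · simp
    rw [hv, aux_scale f hf, aux_scale g hg, h (x / t)]
  set P : Polynomial ℝ :=
    MvPolynomial.aeval ![Polynomial.C (v 0), Polynomial.X] (f - g) with hP
  have hPev : ∀ t : ℝ, P.eval t = MvPolynomial.eval ![v 0, t] (f - g) := by
    intro t
    have h1 := MvPolynomial.comp_aeval_apply (Polynomial.aeval t : Polynomial ℝ →ₐ[ℝ] ℝ)
        (f := ![Polynomial.C (v 0), Polynomial.X]) (f - g)
    have h2 : (fun i => (Polynomial.aeval t : Polynomial ℝ →ₐ[ℝ] ℝ)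
        (![Polynomial.C (v 0), Polynomial.X] i)) = ![v 0, t] := by
      funext i
      fin_cases i <;> simp
    rw [h2] at h1
    have h3 : (Polynomial.aeval t : Polynomial ℝ →ₐ[ℝ] ℝ) P = P.eval t := by
      rw [← Polynomial.coe_aeval_eq_eval]
    rw [← h3, hP, h1, aux_mv_aeval_eq_eval]
  have hP0 : P = 0 := by
    apply Polynomial.eq_zero_of_infinite_isRoot
    apply Set.Infinite.mono (s := ({0}ᶜ : Set ℝ))
    · intro t ht
      have ht0 : t ≠ 0 := ht
      show P.IsRoot t
      rw [Polynomial.IsRoot, hPev t, map_sub, key (v 0) t ht0, sub_self]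
    · exact Set.Finite.infinite_compl (Set.finite_singleton 0)
  have hv2 : v = ![v 0, v 1] := by
    funext i
    fin_cases i <;> rfl
  have hfin := hPev (v 1)
  rw [hP0] at hfin
  simp only [Polynomial.eval_zero] at hfin
  rw [map_sub] at hfin
  rw [hv2]
  linarith [hfin]

noncomputable def auxHom (a : Polynomial ℝ) (d : ℕ) : MvPolynomial (Fin 2) ℝ :=
  ∑ i ∈ Finset.range (d + 1),
    MvPolynomial.monomial (Finsupp.single 0 i + Finsupp.single 1 (d - i)) (a.coeff i)

lemma auxHom_isHomogeneous (a : Polynomial ℝ) (d : ℕ) :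
    (auxHom a d).IsHomogeneous d := by
  apply MvPolynomial.IsHomogeneous.sum
  intro i hi
  apply MvPolynomial.isHomogeneous_monomial
  rw [aux_degree_eq_sum]
  have hi' : i ≤ d := by
    have := Finset.mem_range.mp hi; omega
  simp [Finsupp.single_apply]
  omega

lemma auxDehom_auxHom (a : Polynomial ℝ) (d : ℕ) (ha : a.natDegree ≤ d) :
    auxDehom (auxHom a d) = a := by
  rw [auxDehom, auxHom, map_sum]
  have h1 : ∀ i ∈ Finset.range (d + 1),
      MvPolynomial.aeval ![Polynomial.X, (1 : Polynomial ℝ)]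
        (MvPolynomial.monomial (Finsupp.single 0 i + Finsupp.single 1 (d - i)) (a.coeff i))
      = Polynomial.monomial i (a.coeff i) := by
    intro i _
    rw [MvPolynomial.aeval_monomial]
    rw [Finsupp.prod_add_index' (by intro x; simp) (by intro x y z; simp [pow_add])]
    rw [Finsupp.prod_single_index (by simp), Finsupp.prod_single_index (by simp)]
    simp [Polynomial.algebraMap_eq, Polynomial.C_mul_X_pow_eq_monomial]
  rw [Finset.sum_congr rfl h1]
  exact (a.as_sum_range' (d + 1) (by omega)).symm

open MvPolynomial

theorem stmt_6 (d : ℕ) (f : MvPolynomial (Fin 2) ℝ)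
    (hf : f.IsHomogeneous (2 * d)) (hfpsd : ∀ v : Fin 2 → ℝ, 0 ≤ eval v f) :
    ∃ p q : MvPolynomial (Fin 2) ℝ, p.IsHomogeneous d ∧ q.IsHomogeneous d ∧
      f = p ^ 2 + q ^ 2 := by
  set F := auxDehom f with hF
  have hFnn : ∀ x, 0 ≤ F.eval x := by
    intro x; rw [hF, auxDehom_eval]; exact hfpsd _
  obtain ⟨a, b, hab, hda, hdb⟩ := aux_sum_two_squares F.natDegree F le_rfl hFnn
  have hFdeg : F.natDegree ≤ 2 * d := auxDehom_natDegree_le f hf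
  have hda' : a.natDegree ≤ d := by omega
  have hdb' : b.natDegree ≤ d := by omega
  refine ⟨auxHom a d, auxHom b d, auxHom_isHomogeneous a d, auxHom_isHomogeneous b d, ?_⟩
  have hsq : (auxHom a d ^ 2 + auxHom b d ^ 2).IsHomogeneous (2 * d) := by
    have h1 := (auxHom_isHomogeneous a d).pow 2
    have h2 := (auxHom_isHomogeneous b d).pow 2
    rw [mul_comm d 2] at h1 h2
    exact h1.add h2
  apply aux_homog_ext (n := 2 * d) hf hsq
  intro x
  have e1 : MvPolynomial.eval ![x, 1] f = F.eval x := (auxDehom_eval f x).symm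
  have e2 : MvPolynomial.eval ![x, 1] (auxHom a d ^ 2 + auxHom b d ^ 2)
      = (a.eval x) ^ 2 + (b.eval x) ^ 2 := by
    rw [map_add, map_pow, map_pow, ← auxDehom_eval, ← auxDehom_eval,
      auxDehom_auxHom a d hda', auxDehom_auxHom b d hdb']
  rw [e1, e2, hab]
  simp
end

section
/- Let f = f₂z² + f₃z + f₄ be a positive semidefinite ternary quartic with fⱼ ∈ ℝ[x,y] a binary form of degree j (j = 2,3,4). Suppose f₂ = l² is the square of a nonzero linear form l ∈ ℝ[x,y]. Then l divides f₃, and writing f₃ = 2l·g₂ with g₂ a quadratic form, the form f₄ − g₂² is positive semidefinite; consequently f = (lz + g₂)² + (f₄ − g₂²) is a sum of three squares of quadratic forms in ℝ[x,y,z]. -/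
open MvPolynomial

namespace Stmt7Aux

lemma aux_rep {l : MvPolynomial (Fin 2) ℝ} (hl : l.IsHomogeneous 1) :
    l = C (coeff (Finsupp.single 0 1) l) * X 0 + C (coeff (Finsupp.single 1 1) l) * X 1 := by
  ext d
  rw [coeff_add, coeff_C_mul, coeff_C_mul, coeff_X', coeff_X']
  by_cases h0 : Finsupp.single (0 : Fin 2) 1 = d
  · subst h0
    have : Finsupp.single (1 : Fin 2) 1 ≠ Finsupp.single (0 : Fin 2) 1 := by
      intro h
      have := DFunLike.congr_fun h (0 : Fin 2)
      simp [Finsupp.single_apply] at this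
    simp [this]
  · by_cases h1 : Finsupp.single (1 : Fin 2) 1 = d
    · subst h1
      simp [h0]
    · have hd : coeff d l = 0 := by
        apply hl.coeff_eq_zero
        intro hdeg
        have hsum : d 0 + d 1 = 1 := by
          have : d.degree = ∑ i : Fin 2, d i := by
            rw [Finsupp.degree]
            exact Finset.sum_subset (Finset.subset_univ _)
              (fun i _ hi => Finsupp.notMem_support_iff.mp hi)
          rw [this, Fin.sum_univ_two] at hdeg
          omega
        have h00 : d 0 = 1 ∧ d 1 = 0 ∨ d 0 = 0 ∧ d 1 = 1 := by omega
        rcases h00 with ⟨ha, hb⟩ | ⟨ha, hb⟩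
        · exact h0 (by ext i; fin_cases i <;> simp [Finsupp.single_apply, ha, hb])
        · exact h1 (by ext i; fin_cases i <;> simp [Finsupp.single_apply, ha, hb])
      simp [h0, h1, hd]

open Polynomial

lemma core (a b : ℝ) (ha : a ≠ 0) (p : MvPolynomial (Fin 2) ℝ)
    (hv : ∀ x y : ℝ, a * x + b * y = 0 → MvPolynomial.eval ![x, y] p = 0) :
    (MvPolynomial.C a * MvPolynomial.X 0 + MvPolynomial.C b * MvPolynomial.X 1) ∣ p := by
  set e := MvPolynomial.finSuccEquiv ℝ 1 with he
  have hC : ∀ r : ℝ, e (MvPolynomial.C r) = Polynomial.C (MvPolynomial.C r) := by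
    intro r; simp [he, finSuccEquiv_apply]
  have hX1 : e (MvPolynomial.X 1) = Polynomial.C (MvPolynomial.X 0) := by
    have : (1 : Fin 2) = Fin.succ 0 := rfl
    rw [this, finSuccEquiv_X_succ]
  set m : Polynomial (MvPolynomial (Fin 1) ℝ) :=
    Polynomial.X + Polynomial.C (MvPolynomial.C (b / a) * MvPolynomial.X 0) with hmdef
  have hm : m.Monic := monic_X_add_C _
  have key : e (MvPolynomial.C a * MvPolynomial.X 0 + MvPolynomial.C b * MvPolynomial.X 1)
      = Polynomial.C (MvPolynomial.C a) * m := by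
    rw [map_add, map_mul, map_mul, hC, hC, hX1, finSuccEquiv_X_zero, hmdef]
    rw [mul_add]
    have hab : a * (b / a) = b := by field_simp
    have h2 : (MvPolynomial.C a : MvPolynomial (Fin 1) ℝ) *
        (MvPolynomial.C (b / a) * MvPolynomial.X 0) = MvPolynomial.C b * MvPolynomial.X 0 := by
      rw [← mul_assoc, ← MvPolynomial.C_mul, hab]
    congr 1
    exact ((map_mul Polynomial.C _ _).symm.trans (congrArg Polynomial.C h2.symm)).trans
      (map_mul Polynomial.C _ _)
  -- show m ∣ e p
  have hmod : e p %ₘ m = 0 := by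
    have hdeg : (e p %ₘ m).degree < 1 := by
      have := Polynomial.degree_modByMonic_lt (e p) hm
      rwa [hmdef, Polynomial.degree_X_add_C] at this
    have hCs : e p %ₘ m = Polynomial.C ((e p %ₘ m).coeff 0) :=
      Polynomial.eq_C_of_degree_le_zero (by
        exact Nat.WithBot.lt_one_iff_le_zero.mp hdeg)
    rw [hCs]
    have hs : (e p %ₘ m).coeff 0 = 0 := by
      apply MvPolynomial.funext
      intro t
      set x : ℝ := -(b * t 0) / a with hx
      have hid := Polynomial.modByMonic_add_div (e p) m
      have happ := congrArg (fun P : Polynomial (MvPolynomial (Fin 1) ℝ) =>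
        Polynomial.eval x (P.map (MvPolynomial.eval t))) hid
      simp only [Polynomial.map_add, Polynomial.map_mul, Polynomial.eval_add,
        Polynomial.eval_mul] at happ
      have hep : Polynomial.eval x ((e p).map (MvPolynomial.eval t)) = 0 := by
        rw [he, ← MvPolynomial.eval_eq_eval_mv_eval']
        have hpt : (Fin.cons x t : Fin 2 → ℝ) = ![x, t 0] := by
          funext i; fin_cases i <;> simp
        rw [hpt]
        apply hv
        rw [hx]; field_simp; ring
      have hmz : Polynomial.eval x (m.map (MvPolynomial.eval t)) = 0 := by
        rw [hmdef]
        simp only [Polynomial.map_add, Polynomial.map_X, Polynomial.map_C, Polynomial.eval_add,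
          Polynomial.eval_X, Polynomial.eval_C, Polynomial.map_mul, Polynomial.eval_mul, map_mul, MvPolynomial.eval_C,
          MvPolynomial.eval_X]
        rw [hx]; field_simp; ring
      rw [hep, hmz, hCs] at happ
      simpa using happ
    rw [hs, Polynomial.C_0]
  have hdvd : m ∣ e p := (Polynomial.modByMonic_eq_zero_iff_dvd hm).mp hmod
  have hu : IsUnit (Polynomial.C (MvPolynomial.C a)) :=
    ((Ne.isUnit ha).map (MvPolynomial.C : ℝ →+* MvPolynomial (Fin 1) ℝ)).map
      (Polynomial.C : MvPolynomial (Fin 1) ℝ →+* Polynomial (MvPolynomial (Fin 1) ℝ))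
  have hel : e (MvPolynomial.C a * MvPolynomial.X 0 + MvPolynomial.C b * MvPolynomial.X 1) ∣ e p := by
    rw [key, mul_comm]
    exact (hu.mul_right_dvd).mpr hdvd
  have := map_dvd e.symm hel
  simpa using this

lemma eval_aeval_poly (g : Fin 2 → Polynomial ℝ) (p : MvPolynomial (Fin 2) ℝ) (t : ℝ) :
    Polynomial.eval t (MvPolynomial.aeval g p) =
      MvPolynomial.eval (fun i => Polynomial.eval t (g i)) p := by
  induction p using MvPolynomial.induction_on with
  | C r => simp
  | add p q hp hq => simp [hp, hq]
  | mul_X p i hp => simp [hp]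

end Stmt7Aux

theorem stmt_7 (f₂ f₃ f₄ l : MvPolynomial (Fin 2) ℝ)
    (h2 : f₂.IsHomogeneous 2) (h3 : f₃.IsHomogeneous 3) (h4 : f₄.IsHomogeneous 4)
    (hl : l.IsHomogeneous 1) (hlne : l ≠ 0) (hf2 : f₂ = l ^ 2)
    (hpsd : ∀ x y z : ℝ,
      0 ≤ eval ![x, y] f₂ * z ^ 2 + eval ![x, y] f₃ * z + eval ![x, y] f₄) :
    l ∣ f₃ ∧ ∀ g₂ : MvPolynomial (Fin 2) ℝ, f₃ = 2 * l * g₂ →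
      (∀ v : Fin 2 → ℝ, 0 ≤ eval v (f₄ - g₂ ^ 2)) ∧
      (∀ x y z : ℝ,
        eval ![x, y] f₂ * z ^ 2 + eval ![x, y] f₃ * z + eval ![x, y] f₄ =
          (eval ![x, y] l * z + eval ![x, y] g₂) ^ 2 + eval ![x, y] (f₄ - g₂ ^ 2)) := by
  classical
  obtain ⟨a, b, hrep⟩ : ∃ a b : ℝ, l = C a * X 0 + C b * X 1 :=
    ⟨_, _, Stmt7Aux.aux_rep hl⟩
  have heval : ∀ u : Fin 2 → ℝ, eval u l = a * u 0 + b * u 1 := by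
    intro u; rw [hrep]; simp
  -- Fact A : f₃ vanishes on the zero set of l
  have hA : ∀ x y : ℝ, eval ![x, y] l = 0 → eval ![x, y] f₃ = 0 := by
    intro x y hxy
    by_contra hc
    set c := eval ![x, y] f₃ with hcdef
    have hf2z : eval ![x, y] f₂ = 0 := by rw [hf2]; simp [hxy]
    have := hpsd x y (-(eval ![x, y] f₄ + 1) / c)
    rw [hf2z] at this
    have hcc : c * (-(eval ![x, y] f₄ + 1) / c) = -(eval ![x, y] f₄ + 1) := by
      field_simp
    rw [← hcdef] at this
    rw [hcc] at this
    linarith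
  have hdvd : l ∣ f₃ := by
    by_cases ha : a ≠ 0
    · rw [hrep]
      exact Stmt7Aux.core a b ha f₃ (fun x y hxy => hA x y (by rw [heval]; simpa using hxy))
    · push_neg at ha
      have hb : b ≠ 0 := by
        intro hb
        exact hlne (by rw [hrep, ha, hb]; simp)
      set sw := renameEquiv ℝ (Equiv.swap (0 : Fin 2) 1) with hsw
      have hswl : sw l = C b * X 0 + C a * X 1 := by
        rw [hrep, hsw]
        simp [Equiv.swap_apply_left, Equiv.swap_apply_right]
        ring
      have hswdvd : sw l ∣ sw f₃ := by
        rw [hswl]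
        apply Stmt7Aux.core b a hb
        intro x y hxy
        rw [hsw]
        simp only [renameEquiv_apply]
        rw [eval_rename]
        have hcomp : (![x, y] ∘ Equiv.swap (0 : Fin 2) 1) = ![y, x] := by
          funext i; fin_cases i <;> simp [Equiv.swap_apply_left, Equiv.swap_apply_right]
        rw [hcomp]
        apply hA
        rw [heval]
        simp only [Matrix.cons_val_zero, Matrix.cons_val_one, Matrix.head_cons]
        linarith
      have := map_dvd sw.symm hswdvd
      simpa using this
  refine ⟨hdvd, ?_⟩
  intro g₂ hg
  -- positivity off the zero set of l
  have posOff : ∀ u : Fin 2 → ℝ, eval u l ≠ 0 → 0 ≤ eval u f₄ - (eval u g₂) ^ 2 := by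
    intro u hu
    set L := eval u l with hL
    set G := eval u g₂ with hG
    have hvec : (![u 0, u 1] : Fin 2 → ℝ) = u := by
      funext i; fin_cases i <;> simp
    have hp := hpsd (u 0) (u 1) (-(G / L))
    rw [hvec, hf2, hg] at hp
    have e2 : eval u (l ^ 2) = L ^ 2 := by simp [hL]
    have e3 : eval u (2 * l * g₂) = 2 * L * G := by simp [hL, hG]
    rw [e2, e3] at hp
    have hz : L ^ 2 * (-(G / L)) ^ 2 + 2 * L * G * (-(G / L)) + eval u f₄
        = eval u f₄ - G ^ 2 := by
      field_simp
      ring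
    linarith [hz ▸ hp]
  constructor
  · intro v
    have hsub : eval v (f₄ - g₂ ^ 2) = eval v f₄ - (eval v g₂) ^ 2 := by simp
    by_cases hLv : eval v l ≠ 0
    · rw [hsub]; exact posOff v hLv
    push_neg at hLv
    obtain ⟨w, hw⟩ : ∃ w : Fin 2 → ℝ, eval w l ≠ 0 := by
      by_contra h
      push_neg at h
      exact hlne (MvPolynomial.funext fun x => by simp [h])
    set P : Polynomial ℝ :=
      MvPolynomial.aeval (fun i => Polynomial.C (v i) + Polynomial.C (w i) * Polynomial.X)
        (f₄ - g₂ ^ 2) with hP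
    have hPt : ∀ t : ℝ, P.eval t = eval (fun i => v i + w i * t) (f₄ - g₂ ^ 2) := by
      intro t
      rw [hP, Stmt7Aux.eval_aeval_poly]
      simp
    have hpos : ∀ t : ℝ, t ≠ 0 → 0 ≤ P.eval t := by
      intro t ht
      rw [hPt]
      have hlin : eval (fun i => v i + w i * t) l = eval v l + eval w l * t := by
        rw [heval, heval, heval]; ring
      have hne : eval (fun i => v i + w i * t) l ≠ 0 := by
        rw [hlin, hLv, zero_add]
        exact mul_ne_zero hw ht
      have := posOff _ hne
      simpa using this
    have hc : Filter.Tendsto (fun t => P.eval t) (nhdsWithin (0:ℝ) {(0:ℝ)}ᶜ) (nhds (P.eval 0)) :=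
      (P.continuous.tendsto 0).mono_left nhdsWithin_le_nhds
    have h0 : 0 ≤ P.eval 0 :=
      ge_of_tendsto hc (by
        filter_upwards [self_mem_nhdsWithin] with t ht using hpos t (by simpa using ht))
    have hPv : P.eval 0 = eval v (f₄ - g₂ ^ 2) := by
      rw [hPt]
      have hfun : (fun i => v i + w i * 0) = v := by funext i; ring
      rw [hfun]
    linarith [hPv ▸ h0]
  · intro x y z
    rw [hf2, hg]
    simp only [map_sub, map_pow, map_mul, map_ofNat]
    ring
end

section
/- Let f ∈ ℝ[x,y,z] be a strictly positive definite quartic form. Then there exists an invertible linear change of coordinates bringing f into the form f = z⁴ + f₂(x,y)z² + f₃(x,y)z + f₄(x,y), where fⱼ is a binary form of degree j, such that the form f − z⁴ is positive semidefinite. -/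
open MvPolynomial

private lemma quad_bound (c0 c1 c2 s : ℝ) (hs : 1 ≤ |s|) :
    c0 + c1 * s + c2 * s ^ 2 ≤ (|c0| + |c1| + |c2|) * s ^ 2 := by
  have hs2 : 1 ≤ s ^ 2 := by nlinarith [sq_abs s]
  have habs : |s| ≤ s ^ 2 := by nlinarith [sq_abs s, abs_nonneg s]
  have e0 : c0 ≤ |c0| * s ^ 2 := by nlinarith [le_abs_self c0, abs_nonneg c0]
  have e1 : c1 * s ≤ |c1| * s ^ 2 := by
    calc c1 * s ≤ |c1 * s| := le_abs_self _
      _ = |c1| * |s| := abs_mul _ _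
      _ ≤ |c1| * s ^ 2 := mul_le_mul_of_nonneg_left habs (abs_nonneg c1)
  have e2 : c2 * s ^ 2 ≤ |c2| * s ^ 2 := by nlinarith [le_abs_self c2]
  nlinarith

private lemma cubic_coeff_zero (c0 c1 c2 c3 : ℝ)
    (h : ∀ s : ℝ, 0 ≤ c0 + c1 * s + c2 * s ^ 2 + c3 * s ^ 3) : c3 = 0 := by
  by_contra hc3
  set K : ℝ := |c0| + |c1| + |c2| with hK
  have hK0 : 0 ≤ K := by positivity
  rcases lt_or_gt_of_ne hc3 with hneg | hpos
  · set t : ℝ := K / (-c3) with ht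
    have ht0 : 0 ≤ t := div_nonneg hK0 (by linarith)
    have htc : (-c3) * t = K := by
      rw [ht, mul_comm, div_mul_cancel₀ _ (by linarith : (-c3) ≠ 0)]
    set s : ℝ := t + 1 with hs
    have hs1 : (1:ℝ) ≤ |s| := le_abs.mpr (Or.inl (by linarith))
    have hs2 : 1 ≤ s ^ 2 := by nlinarith [sq_abs s]
    have h1 := h s
    have h2 := quad_bound c0 c1 c2 s hs1
    have h3 : c3 * s = -K + c3 := by rw [hs]; linear_combination -htc
    have h4 : c3 * s ^ 3 = (-K + c3) * s ^ 2 := by linear_combination (s^2) * h3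
    nlinarith [h1, h2, h4, hs2]
  · set t : ℝ := K / c3 with ht
    have ht0 : 0 ≤ t := div_nonneg hK0 (by linarith)
    have htc : c3 * t = K := by
      rw [ht, mul_comm, div_mul_cancel₀ _ (by linarith : c3 ≠ 0)]
    set s : ℝ := -(t + 1) with hs
    have hs1 : (1:ℝ) ≤ |s| := le_abs.mpr (Or.inr (by linarith))
    have hs2 : 1 ≤ s ^ 2 := by nlinarith [sq_abs s]
    have h1 := h s
    have h2 := quad_bound c0 c1 c2 s hs1
    have h3 : c3 * s = -K - c3 := by rw [hs]; linear_combination -htc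
    have h4 : c3 * s ^ 3 = (-K - c3) * s ^ 2 := by linear_combination (s^2) * h3
    nlinarith [h1, h2, h4, hs2]

private lemma eval_smul_pow {σ : Type*} {p : MvPolynomial σ ℝ} {n : ℕ}
    (hp : p.IsHomogeneous n) (c : ℝ) (v : σ → ℝ) :
    eval (c • v) p = c ^ n * eval v p := by
  rw [eval_eq, eval_eq, Finset.mul_sum]
  refine Finset.sum_congr rfl fun d hd => ?_
  have hdeg : ∑ i ∈ d.support, d i = n := by
    have := hp (mem_support_iff.mp hd)
    simpa [Finsupp.weight_apply, Finsupp.sum] using this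
  calc coeff d p * ∏ i ∈ d.support, (c • v) i ^ d i
      = coeff d p * ∏ i ∈ d.support, (c ^ d i * v i ^ d i) := by
        simp [mul_pow]
    _ = coeff d p * ((∏ i ∈ d.support, c ^ d i) * ∏ i ∈ d.support, v i ^ d i) := by
        rw [Finset.prod_mul_distrib]
    _ = c ^ n * (coeff d p * ∏ i ∈ d.support, v i ^ d i) := by
        rw [Finset.prod_pow_eq_pow_sum, hdeg]; ring

theorem stmt_9 (f : MvPolynomial (Fin 3) ℝ) (hf : f.IsHomogeneous 4)
    (hpos : ∀ v : Fin 3 → ℝ, v ≠ 0 → 0 < eval v f) :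
    ∃ A : Matrix (Fin 3) (Fin 3) ℝ, IsUnit A.det ∧
      ∃ f₂ f₃ f₄ : MvPolynomial (Fin 2) ℝ,
        f₂.IsHomogeneous 2 ∧ f₃.IsHomogeneous 3 ∧ f₄.IsHomogeneous 4 ∧
        (∀ v : Fin 3 → ℝ, eval (A.mulVec v) f =
          (v 2) ^ 4 + eval ![v 0, v 1] f₂ * (v 2) ^ 2 +
            eval ![v 0, v 1] f₃ * (v 2) + eval ![v 0, v 1] f₄) ∧
        (∀ v : Fin 3 → ℝ, 0 ≤ eval (A.mulVec v) f - (v 2) ^ 4) := by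
  classical
  -- continuity of evaluation on Euclidean space
  have hcont : Continuous fun x : EuclideanSpace ℝ (Fin 3) => eval (fun i => x i) f := by
    exact (MvPolynomial.continuous_eval (p := f)).comp
      (PiLp.continuousLinearEquiv 2 ℝ (fun _ : Fin 3 => ℝ)).continuous
  have hnorm : ∀ x : EuclideanSpace ℝ (Fin 3), ‖x‖ = Real.sqrt (∑ i, x i ^ 2) := by
    intro x
    rw [EuclideanSpace.norm_eq]
    simp [Real.norm_eq_abs, sq_abs]
  -- minimum on the unit sphere
  obtain ⟨u, huS, humin⟩ := (isCompact_sphere (0 : EuclideanSpace ℝ (Fin 3)) 1).exists_isMinOn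
    (NormedSpace.sphere_nonempty.mpr zero_le_one) hcont.continuousOn
  have hun : ‖u‖ = 1 := mem_sphere_zero_iff_norm.mp huS
  have hu1 : ∑ i, u i ^ 2 = 1 := by
    have h := hnorm u
    rw [hun] at h
    have h2 : (0:ℝ) ≤ ∑ i, u i ^ 2 := Finset.sum_nonneg fun i _ => sq_nonneg _
    nlinarith [Real.sq_sqrt h2]
  set m : ℝ := eval (fun i => u i) f with hmdef
  have hm : 0 < m := by
    apply hpos
    intro h0
    have hz : ∑ i, u i ^ 2 = 0 := Finset.sum_eq_zero fun i _ => by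
      rw [congrFun h0 i]; simp
    rw [hz] at hu1; norm_num at hu1
  -- minimality rephrased
  have hmin' : ∀ y : Fin 3 → ℝ, (∑ i, y i ^ 2) = 1 → m ≤ eval y f := by
    intro y hy
    have hmem : (WithLp.toLp 2 y : EuclideanSpace ℝ (Fin 3)) ∈ Metric.sphere (0 : EuclideanSpace ℝ (Fin 3)) 1 := by
      rw [mem_sphere_zero_iff_norm, hnorm]
      rw [show ∑ i, (WithLp.toLp 2 y : EuclideanSpace ℝ (Fin 3)).ofLp i ^ 2 = 1 from hy]
      exact Real.sqrt_one
    exact isMinOn_iff.mp humin _ hmem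
  -- the global lower bound
  have hlb : ∀ x : Fin 3 → ℝ, m * (∑ i, x i ^ 2) ^ 2 ≤ eval x f := by
    intro x
    by_cases hx : x = 0
    · subst hx
      have h0 : constantCoeff f = 0 := by
        rw [constantCoeff_eq]
        exact hf.coeff_eq_zero (by simp)
      simp [h0]
    · obtain ⟨i, hi⟩ := Function.ne_iff.mp hx
      have hi' : x i ≠ 0 := by simpa using hi
      have hSx : 0 < ∑ j, x j ^ 2 := by
        have h1 : 0 < x i ^ 2 := by positivity
        have h2 : x i ^ 2 ≤ ∑ j, x j ^ 2 :=
          Finset.single_le_sum (f := fun j => x j ^ 2) (fun j _ => sq_nonneg _) (Finset.mem_univ i)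
        linarith
      set r := Real.sqrt (∑ j, x j ^ 2) with hrdef
      have hr : 0 < r := Real.sqrt_pos.mpr hSx
      have hr2 : r ^ 2 = ∑ j, x j ^ 2 := Real.sq_sqrt hSx.le
      have hy1 : ∑ j, (r⁻¹ • x) j ^ 2 = 1 := by
        have h : ∑ j, (r⁻¹ * x j) ^ 2 = r⁻¹ ^ 2 * ∑ j, x j ^ 2 := by
          rw [Finset.mul_sum]; exact Finset.sum_congr rfl fun j _ => by ring
        simp only [Pi.smul_apply, smul_eq_mul]
        rw [h, ← hr2]
        field_simp
      have hevalx : eval x f = r ^ 4 * eval (r⁻¹ • x) f := by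
        calc eval x f = eval (r • (r⁻¹ • x)) f := by
              rw [smul_smul, mul_inv_cancel₀ hr.ne', one_smul]
          _ = r ^ 4 * eval (r⁻¹ • x) f := eval_smul_pow hf _ _
      have hmy := hmin' (r⁻¹ • x) hy1
      rw [hevalx, ← hr2]
      nlinarith [pow_pos hr 4]
  -- scaling constant
  set c : ℝ := (Real.sqrt (Real.sqrt m))⁻¹ with hcdef
  have hc : 0 < c := by
    rw [hcdef]
    exact inv_pos.mpr (Real.sqrt_pos.mpr (Real.sqrt_pos.mpr hm))
  have hc4 : c ^ 4 * m = 1 := by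
    have h1 : Real.sqrt (Real.sqrt m) ^ 2 = Real.sqrt m := Real.sq_sqrt (Real.sqrt_nonneg m)
    have h2 : Real.sqrt m ^ 2 = m := Real.sq_sqrt hm.le
    have h3 : Real.sqrt (Real.sqrt m) ^ 4 = m := by
      rw [show (4:ℕ) = 2 * 2 from rfl, pow_mul, h1, h2]
    rw [hcdef, inv_pow, h3, inv_mul_cancel₀ hm.ne']
  -- orthonormal basis containing u
  have horth : Orthonormal ℝ (Set.restrict {(2 : Fin 3)} fun _ : Fin 3 => u) := by
    rw [orthonormal_iff_ite]
    intro i j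
    have hij : i = j := by
      apply Subtype.ext
      have hi := i.2; have hj := j.2
      simp only [Set.mem_singleton_iff] at hi hj
      rw [hi, hj]
    subst hij
    simp only [if_pos rfl, Set.restrict_apply]
    rw [real_inner_self_eq_norm_sq, show ‖Set.restrict {(2 : Fin 3)} (fun _ : Fin 3 => u) i‖ = ‖u‖ from rfl, hun]; norm_num
  obtain ⟨b, hb⟩ := horth.exists_orthonormalBasis_extension_of_card_eq
    (by simp [finrank_euclideanSpace])
  have hb2 : b 2 = u := hb 2 (Set.mem_singleton _)
  have hbo : ∀ i j, (∑ k, b i k * b j k) = if i = j then 1 else 0 := by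
    intro i j
    have h := orthonormal_iff_ite.mp b.orthonormal i j
    simpa [PiLp.inner_apply, RCLike.inner_apply, conj_trivial, mul_comm] using h
  obtain ⟨M, hMdef⟩ : ∃ M : Matrix (Fin 3) (Fin 3) ℝ, M = Matrix.of fun k i => b i k := ⟨_, rfl⟩
  have hMtM : M.transpose * M = 1 := by
    ext i j
    simp only [Matrix.mul_apply, Matrix.transpose_apply, hMdef, Matrix.of_apply,
      Matrix.one_apply]
    exact hbo i j
  obtain ⟨A, hAdef⟩ : ∃ A : Matrix (Fin 3) (Fin 3) ℝ, A = c • M := ⟨_, rfl⟩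
  have hdet : IsUnit A.det := by
    have hBA : (c⁻¹ • M.transpose) * A = 1 := by
      rw [hAdef, Matrix.smul_mul, Matrix.mul_smul, smul_smul, inv_mul_cancel₀ hc.ne',
        one_smul, hMtM]
    have hd : (c⁻¹ • M.transpose).det * A.det = 1 := by
      rw [← Matrix.det_mul, hBA, Matrix.det_one]
    exact IsUnit.of_mul_eq_one _ (by rw [mul_comm]; exact hd)
  -- quadratic form identities
  have hSM : ∀ v : Fin 3 → ℝ, ∑ k, (M.mulVec v) k ^ 2 = ∑ i, v i ^ 2 := by
    intro v
    have key : dotProduct (M.mulVec v) (M.mulVec v) = dotProduct v v := by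
      calc dotProduct (M.mulVec v) (M.mulVec v)
          = dotProduct (Matrix.vecMul v M.transpose) (M.mulVec v) := by
            rw [Matrix.vecMul_transpose]
        _ = dotProduct v (M.transpose.mulVec (M.mulVec v)) :=
            (Matrix.dotProduct_mulVec v M.transpose (M.mulVec v)).symm
        _ = dotProduct v ((M.transpose * M).mulVec v) := by rw [Matrix.mulVec_mulVec]
        _ = dotProduct v v := by rw [hMtM, Matrix.one_mulVec]
    simpa [dotProduct, sq] using key
  have hSA : ∀ v : Fin 3 → ℝ, ∑ k, (A.mulVec v) k ^ 2 = c ^ 2 * ∑ i, v i ^ 2 := by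
    intro v
    rw [hAdef, Matrix.smul_mulVec]
    calc ∑ k, (c • M.mulVec v) k ^ 2 = ∑ k, c ^ 2 * (M.mulVec v) k ^ 2 := by
          refine Finset.sum_congr rfl fun k _ => ?_
          simp [Pi.smul_apply, smul_eq_mul]; ring
      _ = c ^ 2 * ∑ k, (M.mulVec v) k ^ 2 := by rw [Finset.mul_sum]
      _ = c ^ 2 * ∑ i, v i ^ 2 := by rw [hSM]
  have hball : ∀ v : Fin 3 → ℝ, (∑ i, v i ^ 2) ^ 2 ≤ eval (A.mulVec v) f := by
    intro v
    have h1 := hlb (A.mulVec v)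
    rw [hSA v] at h1
    nlinarith [h1, hc4, sq_nonneg (∑ i, v i ^ 2)]
  -- the linear substitution
  obtain ⟨L, hLdef⟩ : ∃ L : Fin 3 → MvPolynomial (Fin 3) ℝ,
      L = fun k => ∑ i, C (A k i) * X (![1, 2, 0] i) := ⟨_, rfl⟩
  obtain ⟨g, hgdef⟩ : ∃ g : MvPolynomial (Fin 3) ℝ, g = aeval L f := ⟨_, rfl⟩
  have hLh : ∀ k, (L k).IsHomogeneous 1 := by
    intro k; rw [hLdef]
    exact IsHomogeneous.sum _ _ _ fun i _ => isHomogeneous_C_mul_X _ _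
  have hgh : g.IsHomogeneous 4 := by
    rw [hgdef]
    simpa using hf.aeval L hLh
  have haeval_eq : ∀ (w : Fin 3 → ℝ) (p : MvPolynomial (Fin 3) ℝ), aeval w p = eval w p := by
    intro w p; rfl
  have hgeval : ∀ v : Fin 3 → ℝ, eval (A.mulVec v) f = eval (![v 2, v 0, v 1]) g := by
    intro v
    rw [hgdef]
    have h1 : eval (![v 2, v 0, v 1]) (aeval L f)
        = eval (fun k => eval (![v 2, v 0, v 1]) (L k)) f := by
      calc eval (![v 2, v 0, v 1]) (aeval L f)
          = (aeval (![v 2, v 0, v 1]) : MvPolynomial (Fin 3) ℝ →ₐ[ℝ] ℝ) (aeval L f) :=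
            (haeval_eq _ _).symm
        _ = aeval (fun k => (aeval (![v 2, v 0, v 1]) : MvPolynomial (Fin 3) ℝ →ₐ[ℝ] ℝ) (L k)) f :=
            comp_aeval_apply _ _ _
        _ = eval (fun k => eval (![v 2, v 0, v 1]) (L k)) f := by
            simp only [haeval_eq]
    have hvec : A.mulVec v = fun k => eval (![v 2, v 0, v 1]) (L k) := by
      funext k
      rw [hLdef]
      simp only [map_sum, eval_mul, eval_C, eval_X]
      rw [Fin.sum_univ_three]
      simp [Matrix.mulVec, dotProduct, Fin.sum_univ_three, Matrix.cons_val_zero,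
        Matrix.cons_val_one, Matrix.head_cons, Matrix.cons_val_two, Matrix.vecTail,
        Matrix.vecHead]
    rw [h1, hvec]
  -- the coefficients in the last variable
  obtain ⟨P, hPdef⟩ : ∃ P : Polynomial (MvPolynomial (Fin 2) ℝ), P = finSuccEquiv ℝ 2 g := ⟨_, rfl⟩
  have hPdeg : P.natDegree < 5 := by
    rw [hPdef]
    have h1 := natDegree_finSuccEquiv g
    have h2 := degreeOf_le_totalDegree g 0
    have h3 := hgh.totalDegree_le
    omega
  have hqh : ∀ j, j ≤ 4 → (P.coeff j).IsHomogeneous (4 - j) := by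
    intro j hj
    rw [hPdef]
    exact hgh.finSuccEquiv_coeff_isHomogeneous j (4 - j) (by omega)
  have hmain : ∀ v : Fin 3 → ℝ,
      eval (A.mulVec v) f = ∑ j ∈ Finset.range 5, eval ![v 0, v 1] (P.coeff j) * (v 2) ^ j := by
    intro v
    rw [hgeval v]
    rw [show (![v 2, v 0, v 1] : Fin 3 → ℝ) = Fin.cons (v 2) ![v 0, v 1] from rfl]
    rw [eval_eq_eval_mv_eval']
    rw [← hPdef]
    rw [Polynomial.eval_eq_sum_range' (Polynomial.natDegree_map_le.trans_lt hPdeg)]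
    refine Finset.sum_congr rfl fun j _ => ?_
    rw [Polynomial.coeff_map]
  -- evaluation of the coefficients at zero
  have hz : ∀ j, j ≤ 3 → eval (0 : Fin 2 → ℝ) (P.coeff j) = 0 := by
    intro j hj
    rw [eval_zero, constantCoeff_eq]
    exact (hqh j (by omega)).coeff_eq_zero (by simp; omega)
  have hA2 : A.mulVec ![0, 0, 1] = c • (fun i => u i) := by
    funext k
    simp [hAdef, hMdef, Matrix.mulVec, dotProduct, Fin.sum_univ_three, hb2]
  have hq4val : eval (0 : Fin 2 → ℝ) (P.coeff 4) = 1 := by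
    have h := hmain ![0, 0, 1]
    have hL : eval (A.mulVec ![0, 0, 1]) f = 1 := by
      rw [hA2, eval_smul_pow hf, ← hmdef, hc4]
    rw [hL] at h
    simp only [Matrix.cons_val_zero, Matrix.cons_val_one, Matrix.head_cons, Matrix.cons_val_two,
      Matrix.vecTail, Matrix.vecHead, Function.comp_apply, Fin.succ_zero_eq_one] at h
    rw [show (![(0:ℝ), 0] : Fin 2 → ℝ) = 0 from by funext i; fin_cases i <;> rfl] at h
    rw [Finset.sum_range_succ, Finset.sum_range_succ, Finset.sum_range_succ,
      Finset.sum_range_succ, Finset.sum_range_one] at h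
    rw [hz 0 (by norm_num), hz 1 (by norm_num), hz 2 (by norm_num), hz 3 (by norm_num)] at h
    simpa using h.symm
  have hq4 : ∀ y : Fin 2 → ℝ, eval y (P.coeff 4) = 1 := by
    intro y
    have h : eval ((0:ℝ) • y) (P.coeff 4) = (0:ℝ) ^ (4 - 4) * eval y (P.coeff 4) :=
      eval_smul_pow (hqh 4 le_rfl) 0 y
    rw [zero_smul] at h
    norm_num at h
    rw [← h]
    rwa [eval_zero] at hq4val
  have hyeta : ∀ y : Fin 2 → ℝ, (![y 0, y 1] : Fin 2 → ℝ) = y := by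
    intro y; funext i; fin_cases i <;> rfl
  have hq3 : ∀ y : Fin 2 → ℝ, eval y (P.coeff 3) = 0 := by
    intro y
    apply cubic_coeff_zero (eval y (P.coeff 0) - (y 0 ^ 2 + y 1 ^ 2) ^ 2) (eval y (P.coeff 1))
      (eval y (P.coeff 2) - 2 * (y 0 ^ 2 + y 1 ^ 2)) (eval y (P.coeff 3))
    intro s
    have h1 := hball ![y 0, y 1, s]
    have h2 := hmain ![y 0, y 1, s]
    simp only [Matrix.cons_val_zero, Matrix.cons_val_one, Matrix.head_cons, Matrix.cons_val_two,
      Matrix.vecTail, Matrix.vecHead, Function.comp_apply, Fin.succ_zero_eq_one] at h1 h2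
    rw [hyeta y] at h2
    rw [Fin.sum_univ_three] at h1
    simp only [Matrix.cons_val_zero, Matrix.cons_val_one, Matrix.head_cons, Matrix.cons_val_two,
      Matrix.vecTail, Matrix.vecHead, Function.comp_apply, Fin.succ_zero_eq_one] at h1
    rw [h2] at h1
    rw [Finset.sum_range_succ, Finset.sum_range_succ, Finset.sum_range_succ,
      Finset.sum_range_succ, Finset.sum_range_one] at h1
    rw [hq4 y] at h1
    nlinarith [h1]
  refine ⟨A, hdet, P.coeff 2, P.coeff 1, P.coeff 0, ?_, ?_, ?_, ?_, ?_⟩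
  · simpa using hqh 2 (by norm_num)
  · simpa using hqh 1 (by norm_num)
  · simpa using hqh 0 (by norm_num)
  · intro v
    rw [hmain v]
    rw [Finset.sum_range_succ, Finset.sum_range_succ, Finset.sum_range_succ,
      Finset.sum_range_succ, Finset.sum_range_one]
    rw [hq3 ![v 0, v 1], hq4 ![v 0, v 1]]
    ring
  · intro v
    have h1 := hball v
    have h2 : (v 2) ^ 4 ≤ (∑ i, v i ^ 2) ^ 2 := by
      rw [Fin.sum_univ_three]
      nlinarith [sq_nonneg (v 0), sq_nonneg (v 1), sq_nonneg (v 2),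
        sq_nonneg (v 0 ^ 2 + v 1 ^ 2)]
    linarith
end

section
/- Let f⁽¹⁾, f⁽²⁾, … be a sequence of quartic forms of the shape z⁴ + f₂z² + f₃z + f₄ (with fⱼ binary forms of degree j) converging coefficient-wise to a form f of the same shape. If every f⁽ʲ⁾ is a sum of three squares of quadratic forms, then f is a sum of three squares of quadratic forms. -/
open MvPolynomial Filter

noncomputable def TT (k d : ℕ) : Finset (Fin k →₀ ℕ) := Finset.finsuppAntidiag Finset.univ d

lemma mem_TT_of_degree {k d : ℕ} {m : Fin k →₀ ℕ} (h : m.degree = d) : m ∈ TT k d := by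
  rw [TT, Finset.mem_finsuppAntidiag]
  refine ⟨?_, Finset.subset_univ _⟩
  rw [← h, Finsupp.degree_apply]
  exact (Finset.sum_subset (Finset.subset_univ _) (by simp +contextual [Finsupp.notMem_support_iff])).symm

lemma eval_eq_sum_TT {k d : ℕ} (q : MvPolynomial (Fin k) ℝ) (hq : q.IsHomogeneous d)
    (v : Fin k → ℝ) :
    eval v q = ∑ m ∈ TT k d, coeff m q * ∏ i, v i ^ m i := by
  conv_lhs => rw [q.as_sum]
  rw [map_sum]
  rw [Finset.sum_subset (fun m hm => mem_TT_of_degree (by rw [Finsupp.degree_eq_weight_one]; exact hq (mem_support_iff.1 hm)))]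
  · apply Finset.sum_congr rfl
    intro m _
    rw [eval_monomial, Finsupp.prod_fintype _ _ (fun i => pow_zero _)]
  · intro m _ hm
    rw [notMem_support_iff.1 hm]
    simp

lemma degree_of_mem_TT {k d : ℕ} {m : Fin k →₀ ℕ} (h : m ∈ TT k d) : m.degree = d := by
  rw [TT, Finset.mem_finsuppAntidiag] at h
  rw [Finsupp.degree_apply, Finset.sum_subset (Finset.subset_univ _)
    (by simp +contextual [Finsupp.notMem_support_iff])]
  exact h.1

lemma tendsto_eval {k d : ℕ} (P : ℕ → MvPolynomial (Fin k) ℝ) (p : MvPolynomial (Fin k) ℝ)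
    (hP : ∀ n, (P n).IsHomogeneous d) (hp : p.IsHomogeneous d)
    (hc : ∀ m, Tendsto (fun n => coeff m (P n)) atTop (nhds (coeff m p)))
    (v : Fin k → ℝ) :
    Tendsto (fun n => eval v (P n)) atTop (nhds (eval v p)) := by
  simp only [fun n => eval_eq_sum_TT (P n) (hP n) v, eval_eq_sum_TT p hp v]
  exact tendsto_finset_sum _ fun m _ => (hc m).mul_const _

noncomputable def ind {k : ℕ} (s : Finset (Fin k)) : Fin k → ℝ := fun i => if i ∈ s then 1 else 0

lemma ind_prod {k : ℕ} (s : Finset (Fin k)) (m : Fin k →₀ ℕ) :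
    (∏ i, ind s i ^ m i) = if m.support ⊆ s then 1 else 0 := by
  split_ifs with h
  · apply Finset.prod_eq_one
    intro i _
    by_cases hi : i ∈ s
    · simp [ind, hi]
    · have : m i = 0 := Finsupp.notMem_support_iff.1 fun hmem => hi (h hmem)
      simp [ind, this]
  · obtain ⟨i, hi, his⟩ := Finset.not_subset.1 h
    apply Finset.prod_eq_zero (Finset.mem_univ i)
    have : m i ≠ 0 := Finsupp.mem_support_iff.1 hi
    simp [ind, his, zero_pow this]

lemma eval_ind {k d : ℕ} (p : MvPolynomial (Fin k) ℝ) (hp : p.IsHomogeneous d)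
    (s : Finset (Fin k)) :
    eval (ind s) p = ∑ m ∈ TT k d, if m.support ⊆ s then coeff m p else 0 := by
  rw [eval_eq_sum_TT p hp]
  apply Finset.sum_congr rfl
  intro m _
  rw [ind_prod]
  split_ifs <;> simp

lemma deg_single {k : ℕ} (i : Fin k) (c : ℕ) : (Finsupp.single i c).degree = c := by
  rw [Finsupp.degree_apply]
  by_cases hc : c = 0
  · simp [hc]
  · rw [Finsupp.support_single_ne_zero _ hc]
    simp

lemma deg_pair {k : ℕ} {i j : Fin k} :
    (Finsupp.single i 1 + Finsupp.single j 1).degree = 2 := by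
  rw [Finsupp.degree_eq_weight_one, map_add, ← Finsupp.degree_eq_weight_one,
    deg_single, deg_single]

lemma coeff_single_sq {p : MvPolynomial (Fin 3) ℝ} (hp : p.IsHomogeneous 2) (i : Fin 3) :
    coeff (Finsupp.single i 2) p = eval (ind {i}) p := by
  rw [eval_ind p hp]
  rw [Finset.sum_eq_single (Finsupp.single i 2)]
  · rw [if_pos]
    rw [Finsupp.support_single_ne_zero _ (by norm_num)]
  · intro b hb hne
    rw [if_neg]
    intro hsub
    apply hne
    have := Finsupp.support_subset_singleton.1 hsub
    have hd := degree_of_mem_TT hb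
    rw [this, deg_single] at hd
    rw [this, hd]
  · intro h
    exact absurd (mem_TT_of_degree (deg_single i 2)) h

lemma pair_ne_sq {k : ℕ} {i j t : Fin k} (hij : i ≠ j) :
    Finsupp.single i 1 + Finsupp.single j 1 ≠ Finsupp.single t 2 := by
  intro h
  have hi := DFunLike.congr_fun h i
  simp only [Finsupp.add_apply, Finsupp.single_apply, Ne.symm hij, if_true, eq_self_iff_true,
    if_false] at hi
  split_ifs at hi <;> omega

lemma sq_ne_sq {k : ℕ} {i j : Fin k} (hij : i ≠ j) :
    Finsupp.single i 2 ≠ Finsupp.single j 2 := by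
  intro h
  have hi := DFunLike.congr_fun h i
  simp [Finsupp.single_apply, if_neg (Ne.symm hij)] at hi

lemma mem_pair_classify {i j : Fin 3} (hij : i ≠ j) {m : Fin 3 →₀ ℕ}
    (hm : m ∈ TT 3 2) (hsub : m.support ⊆ {i, j}) :
    m = Finsupp.single i 2 ∨ m = Finsupp.single j 2 ∨
      m = Finsupp.single i 1 + Finsupp.single j 1 := by
  have hdeg := degree_of_mem_TT hm
  have hzero : ∀ t, t ≠ i → t ≠ j → m t = 0 := by
    intro t hti htj
    by_contra h
    have := hsub (Finsupp.mem_support_iff.2 h)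
    simp [hti, htj] at this
  have hsum : m i + m j = 2 := by
    rw [Finsupp.degree_apply] at hdeg
    rw [← hdeg]
    rw [Finset.sum_subset hsub (by simp +contextual [Finsupp.notMem_support_iff])]
    rw [Finset.sum_insert (by simp [hij]), Finset.sum_singleton]
  have key : ∀ a b : ℕ, m i = a → m j = b →
      (∀ t, m t = (Finsupp.single i a + Finsupp.single j b) t) := by
    intro a b ha hb t
    simp only [Finsupp.add_apply, Finsupp.single_apply]
    by_cases hti : i = t
    · subst hti
      rw [if_pos rfl, if_neg (Ne.symm hij), ha]
      omega
    · by_cases htj : j = t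
      · subst htj
        rw [if_neg hij, if_pos rfl, hb]
        omega
      · rw [if_neg hti, if_neg htj, hzero t (Ne.symm hti) (Ne.symm htj)]
        omega
  have hle : m i ≤ 2 := by omega
  interval_cases h : m i
  · right; left
    ext t
    have := key 0 2 rfl (by omega) t
    simpa using this
  · right; right
    ext t
    exact key 1 1 rfl (by omega) t
  · left
    ext t
    have := key 2 0 rfl (by omega) t
    simpa using this

lemma coeff_pair {p : MvPolynomial (Fin 3) ℝ} (hp : p.IsHomogeneous 2) {i j : Fin 3}
    (hij : i ≠ j) :
    eval (ind {i, j}) p = coeff (Finsupp.single i 2) p + coeff (Finsupp.single j 2) p +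
      coeff (Finsupp.single i 1 + Finsupp.single j 1) p := by
  rw [eval_ind p hp]
  have hsubE : ({Finsupp.single i 2, Finsupp.single j 2,
      Finsupp.single i 1 + Finsupp.single j 1} : Finset (Fin 3 →₀ ℕ)) ⊆ TT 3 2 := by
    intro m hm
    simp only [Finset.mem_insert, Finset.mem_singleton] at hm
    rcases hm with rfl | rfl | rfl
    · exact mem_TT_of_degree (deg_single i 2)
    · exact mem_TT_of_degree (deg_single j 2)
    · exact mem_TT_of_degree deg_pair
  rw [← Finset.sum_subset hsubE]
  · have h1 : Finsupp.single i 2 ∉ ({Finsupp.single j 2,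
        Finsupp.single i 1 + Finsupp.single j 1} : Finset (Fin 3 →₀ ℕ)) := by
      simp only [Finset.mem_insert, Finset.mem_singleton]
      push_neg
      exact ⟨sq_ne_sq hij, fun h => pair_ne_sq hij h.symm⟩
    have h2 : Finsupp.single j 2 ∉ ({Finsupp.single i 1 + Finsupp.single j 1} :
        Finset (Fin 3 →₀ ℕ)) := by
      simp only [Finset.mem_singleton]
      exact fun h => pair_ne_sq hij h.symm
    rw [Finset.sum_insert h1, Finset.sum_insert h2, Finset.sum_singleton]
    have si : (Finsupp.single i (2:ℕ)).support ⊆ {i, j} := by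
      rw [Finsupp.support_single_ne_zero _ (by norm_num)]
      simp
    have sj : (Finsupp.single j (2:ℕ)).support ⊆ {i, j} := by
      rw [Finsupp.support_single_ne_zero _ (by norm_num)]
      simp
    have sij : (Finsupp.single i 1 + Finsupp.single j 1).support ⊆ ({i, j} : Finset (Fin 3)) := by
      refine Finsupp.support_add.trans ?_
      apply Finset.union_subset
      · rw [Finsupp.support_single_ne_zero _ (by norm_num)]; simp
      · rw [Finsupp.support_single_ne_zero _ (by norm_num)]; simp
    rw [if_pos si, if_pos sj, if_pos sij]
    ring
  · intro m hm hnot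
    rw [if_neg]
    intro hsub
    rcases mem_pair_classify hij hm hsub with rfl | rfl | rfl <;>
      exact hnot (by simp)

lemma classify2 {m : Fin 3 →₀ ℕ} (hd : m.degree = 2) :
    (∃ i, m = Finsupp.single i 2) ∨
    (∃ i j, i ≠ j ∧ m = Finsupp.single i 1 + Finsupp.single j 1) := by
  have hmem := mem_TT_of_degree hd
  rw [TT, Finset.mem_finsuppAntidiag] at hmem
  have hsum : m 0 + m 1 + m 2 = 2 := by
    have := hmem.1
    rwa [Fin.sum_univ_three] at this
  have hc : (m 0 = 2 ∧ m 1 = 0 ∧ m 2 = 0) ∨ (m 1 = 2 ∧ m 0 = 0 ∧ m 2 = 0) ∨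
      (m 2 = 2 ∧ m 0 = 0 ∧ m 1 = 0) ∨ (m 0 = 1 ∧ m 1 = 1 ∧ m 2 = 0) ∨
      (m 0 = 1 ∧ m 2 = 1 ∧ m 1 = 0) ∨ (m 1 = 1 ∧ m 2 = 1 ∧ m 0 = 0) := by omega
  rcases hc with ⟨h1,h2,h3⟩|⟨h1,h2,h3⟩|⟨h1,h2,h3⟩|⟨h1,h2,h3⟩|⟨h1,h2,h3⟩|⟨h1,h2,h3⟩
  · exact Or.inl ⟨0, by ext t; fin_cases t <;> simp [Finsupp.single_apply] <;> omega⟩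
  · exact Or.inl ⟨1, by ext t; fin_cases t <;> simp [Finsupp.single_apply] <;> omega⟩
  · exact Or.inl ⟨2, by ext t; fin_cases t <;> simp [Finsupp.single_apply] <;> omega⟩
  · exact Or.inr ⟨0, 1, by decide, by ext t; fin_cases t <;> simp [Finsupp.single_apply] <;> omega⟩
  · exact Or.inr ⟨0, 2, by decide, by ext t; fin_cases t <;> simp [Finsupp.single_apply] <;> omega⟩
  · exact Or.inr ⟨1, 2, by decide, by ext t; fin_cases t <;> simp [Finsupp.single_apply] <;> omega⟩

lemma coeff_abs_bound {p : MvPolynomial (Fin 3) ℝ} (hp : p.IsHomogeneous 2) {M : ℝ}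
    (hM : ∀ s : Finset (Fin 3), |eval (ind s) p| ≤ M) (m : Fin 3 →₀ ℕ) :
    |coeff m p| ≤ 3 * M := by
  have hM0 : 0 ≤ M := le_trans (abs_nonneg _) (hM ∅)
  by_cases hd : m.degree = 2
  · rcases classify2 hd with ⟨i, rfl⟩ | ⟨i, j, hij, rfl⟩
    · rw [coeff_single_sq hp]
      linarith [hM {i}]
    · have hkey := coeff_pair hp hij
      have hc : coeff (Finsupp.single i 1 + Finsupp.single j 1) p =
          eval (ind {i, j}) p - eval (ind {i}) p - eval (ind {j}) p := by
        rw [hkey, coeff_single_sq hp i, coeff_single_sq hp j]; ring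
      rw [hc]
      have h1 := abs_le.1 (hM {i, j})
      have h2 := abs_le.1 (hM {i})
      have h3 := abs_le.1 (hM {j})
      rw [abs_le]
      constructor <;> linarith
  · rw [hp.coeff_eq_zero hd, abs_zero]
    linarith

lemma vec3_eta (v : Fin 3 → ℝ) : ![v 0, v 1, v 2] = v := by
  funext t
  fin_cases t <;> rfl

theorem stmt_11 (F₂ F₃ F₄ : ℕ → MvPolynomial (Fin 2) ℝ)
    (f₂ f₃ f₄ : MvPolynomial (Fin 2) ℝ)
    (hdeg : ∀ n, (F₂ n).IsHomogeneous 2 ∧ (F₃ n).IsHomogeneous 3 ∧ (F₄ n).IsHomogeneous 4)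
    (h2 : f₂.IsHomogeneous 2) (h3 : f₃.IsHomogeneous 3) (h4 : f₄.IsHomogeneous 4)
    (hconv : ∀ m : Fin 2 →₀ ℕ,
      Tendsto (fun n => coeff m (F₂ n)) atTop (nhds (coeff m f₂)) ∧
      Tendsto (fun n => coeff m (F₃ n)) atTop (nhds (coeff m f₃)) ∧
      Tendsto (fun n => coeff m (F₄ n)) atTop (nhds (coeff m f₄)))
    (hsos : ∀ n, ∃ p₁ p₂ p₃ : MvPolynomial (Fin 3) ℝ,
      p₁.IsHomogeneous 2 ∧ p₂.IsHomogeneous 2 ∧ p₃.IsHomogeneous 2 ∧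
      ∀ x y z : ℝ,
        z ^ 4 + eval ![x, y] (F₂ n) * z ^ 2 + eval ![x, y] (F₃ n) * z +
            eval ![x, y] (F₄ n) =
          eval ![x, y, z] p₁ ^ 2 + eval ![x, y, z] p₂ ^ 2 + eval ![x, y, z] p₃ ^ 2) :
    ∃ p₁ p₂ p₃ : MvPolynomial (Fin 3) ℝ,
      p₁.IsHomogeneous 2 ∧ p₂.IsHomogeneous 2 ∧ p₃.IsHomogeneous 2 ∧
      ∀ x y z : ℝ,
        z ^ 4 + eval ![x, y] f₂ * z ^ 2 + eval ![x, y] f₃ * z + eval ![x, y] f₄ =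
          eval ![x, y, z] p₁ ^ 2 + eval ![x, y, z] p₂ ^ 2 + eval ![x, y, z] p₃ ^ 2 := by
  choose P1 P2 P3 hP1 hP2 hP3 hEq using hsos
  set Q : Fin 3 → ℕ → MvPolynomial (Fin 3) ℝ := ![P1, P2, P3] with hQ
  have hQdeg : ∀ i n, (Q i n).IsHomogeneous 2 := by
    intro i n
    fin_cases i
    · exact hP1 n
    · exact hP2 n
    · exact hP3 n
  -- the quartic value converges at every point
  have hGconv : ∀ v : Fin 3 → ℝ, Tendsto (fun n =>
      v 2 ^ 4 + eval ![v 0, v 1] (F₂ n) * v 2 ^ 2 + eval ![v 0, v 1] (F₃ n) * v 2 +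
        eval ![v 0, v 1] (F₄ n)) atTop (nhds
      (v 2 ^ 4 + eval ![v 0, v 1] f₂ * v 2 ^ 2 + eval ![v 0, v 1] f₃ * v 2 +
        eval ![v 0, v 1] f₄)) := by
    intro v
    have t2 := tendsto_eval F₂ f₂ (fun n => (hdeg n).1) h2 (fun m => (hconv m).1) ![v 0, v 1]
    have t3 := tendsto_eval F₃ f₃ (fun n => (hdeg n).2.1) h3 (fun m => (hconv m).2.1) ![v 0, v 1]
    have t4 := tendsto_eval F₄ f₄ (fun n => (hdeg n).2.2) h4 (fun m => (hconv m).2.2) ![v 0, v 1]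
    exact (((tendsto_const_nhds.add (t2.mul_const _)).add (t3.mul_const _)).add t4)
  -- bound on eval of the P's at each point
  have hbdd : ∀ v : Fin 3 → ℝ, ∃ B : ℝ, ∀ i n, (eval v (Q i n)) ^ 2 ≤ B := by
    intro v
    obtain ⟨B, hB⟩ := (hGconv v).bddAbove_range
    refine ⟨B, fun i n => ?_⟩
    have hgn := hEq n (v 0) (v 1) (v 2)
    rw [vec3_eta v] at hgn
    have hmem : v 2 ^ 4 + eval ![v 0, v 1] (F₂ n) * v 2 ^ 2 + eval ![v 0, v 1] (F₃ n) * v 2 +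
        eval ![v 0, v 1] (F₄ n) ≤ B := hB (Set.mem_range_self n)
    have k1 : eval v (P1 n) ^ 2 ≤ B := by
      nlinarith [sq_nonneg (eval v (P2 n)), sq_nonneg (eval v (P3 n))]
    have k2 : eval v (P2 n) ^ 2 ≤ B := by
      nlinarith [sq_nonneg (eval v (P1 n)), sq_nonneg (eval v (P3 n))]
    have k3 : eval v (P3 n) ^ 2 ≤ B := by
      nlinarith [sq_nonneg (eval v (P1 n)), sq_nonneg (eval v (P2 n))]
    fin_cases i
    · exact k1
    · exact k2
    · exact k3
  choose B hB using hbdd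
  set M : ℝ := ∑ s ∈ (Finset.univ : Finset (Fin 3)).powerset, Real.sqrt (B (ind s)) with hM
  have hMs : ∀ s : Finset (Fin 3), Real.sqrt (B (ind s)) ≤ M := by
    intro s
    rw [hM]
    exact Finset.single_le_sum (f := fun s => Real.sqrt (B (ind s)))
      (fun _ _ => Real.sqrt_nonneg _) (Finset.mem_powerset.2 (Finset.subset_univ s))
  have hevalbd : ∀ i n (s : Finset (Fin 3)), |eval (ind s) (Q i n)| ≤ M := by
    intro i n s
    have h1 : |eval (ind s) (Q i n)| = Real.sqrt ((eval (ind s) (Q i n)) ^ 2) :=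
      (Real.sqrt_sq_eq_abs _).symm
    rw [h1]
    exact le_trans (Real.sqrt_le_sqrt (hB (ind s) i n)) (hMs s)
  have hcoeffbd : ∀ i n m, |coeff m (Q i n)| ≤ 3 * M :=
    fun i n m => coeff_abs_bound (hQdeg i n) (hevalbd i n) m
  -- compactness
  set K : Set (Fin 3 → (Fin 3 →₀ ℕ) → ℝ) :=
    Set.univ.pi fun _ => Set.univ.pi fun _ => Set.Icc (-(3 * M)) (3 * M) with hK
  have hKcomp : IsCompact K :=
    isCompact_univ_pi fun _ => isCompact_univ_pi fun _ => isCompact_Icc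
  have hxK : ∀ n, (fun i m => coeff m (Q i n)) ∈ K := by
    intro n
    rw [hK]
    intro i _
    intro m _
    exact abs_le.1 (hcoeffbd i n m)
  obtain ⟨c, _, φ, hφ, hconv'⟩ := hKcomp.tendsto_subseq hxK
  have hcomp : ∀ i m, Tendsto (fun k => coeff m (Q i (φ k))) atTop (nhds (c i m)) := by
    intro i m
    have h1 := tendsto_pi_nhds.1 hconv' i
    exact tendsto_pi_nhds.1 h1 m
  -- limit polynomials
  set q : Fin 3 → MvPolynomial (Fin 3) ℝ := fun i => ∑ m ∈ TT 3 2, monomial m (c i m) with hq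
  have hqdeg : ∀ i, (q i).IsHomogeneous 2 := by
    intro i
    exact IsHomogeneous.sum _ _ _ fun m hm => isHomogeneous_monomial _ (degree_of_mem_TT hm)
  have hqcoeff : ∀ i m, m ∈ TT 3 2 → coeff m (q i) = c i m := by
    intro i m hm
    rw [hq]
    simp only [coeff_sum, coeff_monomial]
    rw [Finset.sum_eq_single m]
    · rw [if_pos rfl]
    · intro b _ hne
      rw [if_neg hne]
    · intro h
      exact absurd hm h
  have hqconv : ∀ i m, Tendsto (fun k => coeff m (Q i (φ k))) atTop (nhds (coeff m (q i))) := by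
    intro i m
    by_cases hd : m.degree = 2
    · rw [hqcoeff i m (mem_TT_of_degree hd)]
      exact hcomp i m
    · have hz : ∀ k, coeff m (Q i (φ k)) = 0 := fun k => (hQdeg i (φ k)).coeff_eq_zero hd
      have hz' : coeff m (q i) = 0 := (hqdeg i).coeff_eq_zero hd
      simp only [hz, hz']
      exact tendsto_const_nhds
  refine ⟨q 0, q 1, q 2, hqdeg 0, hqdeg 1, hqdeg 2, ?_⟩
  intro x y z
  set v : Fin 3 → ℝ := ![x, y, z] with hv
  have hφtop : Tendsto φ atTop atTop := hφ.tendsto_atTop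
  have hL : Tendsto (fun k =>
      z ^ 4 + eval ![x, y] (F₂ (φ k)) * z ^ 2 + eval ![x, y] (F₃ (φ k)) * z +
        eval ![x, y] (F₄ (φ k))) atTop (nhds
      (z ^ 4 + eval ![x, y] f₂ * z ^ 2 + eval ![x, y] f₃ * z + eval ![x, y] f₄)) := by
    have := (hGconv v).comp hφtop
    simpa [hv, Function.comp_def] using this
  have hR : Tendsto (fun k =>
      eval v (Q 0 (φ k)) ^ 2 + eval v (Q 1 (φ k)) ^ 2 + eval v (Q 2 (φ k)) ^ 2) atTop
      (nhds (eval v (q 0) ^ 2 + eval v (q 1) ^ 2 + eval v (q 2) ^ 2)) := by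
    have t0 := tendsto_eval (fun k => Q 0 (φ k)) (q 0) (fun k => hQdeg 0 (φ k)) (hqdeg 0)
      (fun m => hqconv 0 m) v
    have t1 := tendsto_eval (fun k => Q 1 (φ k)) (q 1) (fun k => hQdeg 1 (φ k)) (hqdeg 1)
      (fun m => hqconv 1 m) v
    have t2 := tendsto_eval (fun k => Q 2 (φ k)) (q 2) (fun k => hQdeg 2 (φ k)) (hqdeg 2)
      (fun m => hqconv 2 m) v
    exact ((t0.pow 2).add (t1.pow 2)).add (t2.pow 2)
  have heq : ∀ k, z ^ 4 + eval ![x, y] (F₂ (φ k)) * z ^ 2 + eval ![x, y] (F₃ (φ k)) * z +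
      eval ![x, y] (F₄ (φ k)) =
      eval v (Q 0 (φ k)) ^ 2 + eval v (Q 1 (φ k)) ^ 2 + eval v (Q 2 (φ k)) ^ 2 := by
    intro k
    have := hEq (φ k) x y z
    simpa [hQ, hv] using this
  have := tendsto_nhds_unique (hL.congr (fun k => heq k)) hR
  rw [this, hv]
end

section
/- Let f(z) = a₀z⁴ + a₂z² + a₃z + a₄ ∈ ℝ[z] with a₀ > 0 be strictly positive (f(t) > 0 for all t ∈ ℝ). Then f has a multiple complex root if and only if a₃ = 0 and a₂² − 4a₀a₄ = 0, i.e., if and only if f = a₀(z² + a₂/(2a₀))². -/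
open Polynomial Complex

private lemma stmt15_expand (w w' c : ℂ) :
    (X - C w) ^ 2 * (X - C w') ^ 2 * C c =
      C c * X ^ 4 + C (c * (-2 * (w + w'))) * X ^ 3 +
        C (c * ((w + w') ^ 2 + 2 * (w * w'))) * X ^ 2 +
        C (c * (-2 * (w + w') * (w * w'))) * X + C (c * (w * w') ^ 2) := by
  simp only [map_mul, map_add, map_neg, map_pow, map_ofNat]
  ring

private lemma stmt15_hard (a₀ a₂ a₃ a₄ : ℝ) (ha₀ : 0 < a₀)
    (hpos : ∀ t : ℝ, 0 < eval t (C a₀ * X ^ 4 + C a₂ * X ^ 2 + C a₃ * X + C a₄))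
    (w : ℂ)
    (hw : 2 ≤ (Polynomial.map (algebraMap ℝ ℂ)
          (C a₀ * X ^ 4 + C a₂ * X ^ 2 + C a₃ * X + C a₄)).rootMultiplicity w) :
    a₃ = 0 ∧ a₂ ^ 2 - 4 * a₀ * a₄ = 0 := by
  set f : ℝ[X] := C a₀ * X ^ 4 + C a₂ * X ^ 2 + C a₃ * X + C a₄ with hf
  have hf0 : f ≠ 0 := fun h => by simpa [h] using hpos 0
  set F := f.map (algebraMap ℝ ℂ) with hFdef
  have hF0 : F ≠ 0 := (Polynomial.map_ne_zero_iff (algebraMap ℝ ℂ).injective).mpr hf0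
  have hFexp : F = C (a₀ : ℂ) * X ^ 4 + C (a₂ : ℂ) * X ^ 2 + C (a₃ : ℂ) * X + C (a₄ : ℂ) := by
    simp [hFdef, hf, Polynomial.map_add, Polynomial.map_mul, Polynomial.map_pow]
  have hdvd : (X - C w) ^ 2 ∣ F := (le_rootMultiplicity_iff hF0).mp hw
  set w' := (starRingEnd ℂ) w with hw'
  have hcomp : (starRingEnd ℂ).comp (algebraMap ℝ ℂ) = algebraMap ℝ ℂ := by
    ext x; simp [Complex.conj_ofReal]
  have hconjF : F.map (starRingEnd ℂ) = F := by
    rw [hFdef, Polynomial.map_map, hcomp]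
  have hdvd' : (X - C w') ^ 2 ∣ F := by
    have h := Polynomial.map_dvd (starRingEnd ℂ) hdvd
    simpa [Polynomial.map_pow, Polynomial.map_sub, hconjF] using h
  -- w is not real
  have him : w.im ≠ 0 := by
    intro h0
    have hroot : F.eval w = 0 := by
      have : 0 < F.rootMultiplicity w := lt_of_lt_of_le (by norm_num) hw
      exact (rootMultiplicity_pos hF0).mp this
    have hwre : w = ((w.re : ℝ) : ℂ) := by
      apply Complex.ext <;> simp [h0]
    rw [hFexp, hwre] at hroot
    have : ((a₀ * w.re ^ 4 + a₂ * w.re ^ 2 + a₃ * w.re + a₄ : ℝ) : ℂ) = 0 := by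
      push_cast
      simpa using hroot
    have h2 : a₀ * w.re ^ 4 + a₂ * w.re ^ 2 + a₃ * w.re + a₄ = 0 :=
      Complex.ofReal_eq_zero.mp this
    have hp := hpos w.re
    simp only [hf, eval_add, eval_mul, eval_pow, eval_C, eval_X] at hp
    linarith
  have hne : w' ≠ w := fun h => him ((Complex.conj_eq_iff_im).mp h)
  have hcop : IsCoprime (X - C w : ℂ[X]) (X - C w') := by
    apply Polynomial.isCoprime_X_sub_C_of_isUnit_sub
    exact (sub_ne_zero.mpr (fun h => hne h.symm)).isUnit
  have hdvdmul : (X - C w) ^ 2 * (X - C w') ^ 2 ∣ F :=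
    (hcop.pow).mul_dvd hdvd hdvd'
  set g : ℂ[X] := (X - C w) ^ 2 * (X - C w') ^ 2 with hg
  have hgmonic : g.Monic := ((monic_X_sub_C w).pow 2).mul ((monic_X_sub_C w').pow 2)
  have hgdeg : g.natDegree = 4 := by
    rw [hg, natDegree_mul (pow_ne_zero _ (X_sub_C_ne_zero w)) (pow_ne_zero _ (X_sub_C_ne_zero w'))]
    simp [natDegree_pow]
  have hfdeg : f.natDegree = 4 := by
    rw [hf]; compute_degree!
    exact ha₀.ne'
  have hFdeg : F.natDegree = 4 := by
    rw [hFdef, natDegree_map_eq_of_injective (algebraMap ℝ ℂ).injective, hfdeg]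
  obtain ⟨q, hq⟩ := hdvdmul
  have hq0 : q ≠ 0 := fun h => hF0 (by rw [hq, h, mul_zero])
  have hqdeg : q.natDegree = 0 := by
    have := natDegree_mul (hgmonic.ne_zero) hq0
    rw [← hq, hFdeg, hgdeg] at this
    omega
  have hqC : q = C (q.coeff 0) := eq_C_of_natDegree_eq_zero hqdeg
  have hlead : q.coeff 0 = (a₀ : ℂ) := by
    have h1 : F.leadingCoeff = g.leadingCoeff * q.leadingCoeff := by
      rw [hq, leadingCoeff_mul]
    rw [hgmonic.leadingCoeff, one_mul] at h1
    have h2 : F.leadingCoeff = (a₀ : ℂ) := by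
      rw [leadingCoeff, hFdeg, hFexp]
      simp [coeff_X_pow, coeff_C]
    have h3 : q.leadingCoeff = q.coeff 0 := by
      rw [leadingCoeff, hqdeg]
    rw [h3, h2] at h1
    exact h1.symm
  have heq : C (a₀ : ℂ) * X ^ 4 + C (a₂ : ℂ) * X ^ 2 + C (a₃ : ℂ) * X + C (a₄ : ℂ) =
      C ((a₀:ℂ)) * X ^ 4 + C ((a₀:ℂ) * (-2 * (w + w'))) * X ^ 3 +
        C ((a₀:ℂ) * ((w + w') ^ 2 + 2 * (w * w'))) * X ^ 2 +
        C ((a₀:ℂ) * (-2 * (w + w') * (w * w'))) * X + C ((a₀:ℂ) * (w * w') ^ 2) := by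
    rw [← hFexp, hq, hqC, hlead, ← stmt15_expand w w' (a₀:ℂ)]
  have hs : w + w' = 0 := by
    have h := congrArg (fun p => coeff p 3) heq
    simp only [coeff_add, coeff_C_mul, coeff_X_pow, coeff_X, coeff_C] at h
    norm_num at h
    rcases h with h | h
    · exact absurd h ha₀.ne'
    · exact h
  have e1 : (a₃ : ℂ) = (a₀:ℂ) * (-2 * (w + w') * (w * w')) := by
    have h := congrArg (fun p => coeff p 1) heq
    simp only [coeff_add, coeff_C_mul, coeff_X_pow, coeff_X, coeff_C] at h
    norm_num at h
    linear_combination h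
  have e2 : (a₂ : ℂ) = (a₀:ℂ) * ((w + w') ^ 2 + 2 * (w * w')) := by
    have h := congrArg (fun p => coeff p 2) heq
    simp only [coeff_add, coeff_C_mul, coeff_X_pow, coeff_X, coeff_C] at h
    norm_num at h
    linear_combination h
  have e0 : (a₄ : ℂ) = (a₀:ℂ) * (w * w') ^ 2 := by
    have h := congrArg (fun p => coeff p 0) heq
    simp only [coeff_add, coeff_C_mul, coeff_X_pow, coeff_X, coeff_C] at h
    norm_num at h
    linear_combination h
  rw [hs] at e1 e2
  constructor
  · have : (a₃ : ℂ) = 0 := by rw [e1]; ring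
    exact Complex.ofReal_eq_zero.mp this
  · have : ((a₂ ^ 2 - 4 * a₀ * a₄ : ℝ) : ℂ) = 0 := by
      push_cast
      rw [e2, e0]; ring
    exact Complex.ofReal_eq_zero.mp this

private lemma stmt15_factor (a₀ a₂ a₃ a₄ : ℝ) (ha₀ : 0 < a₀)
    (h3 : a₃ = 0) (hd : a₂ ^ 2 - 4 * a₀ * a₄ = 0) :
    (C a₀ * X ^ 4 + C a₂ * X ^ 2 + C a₃ * X + C a₄ : ℝ[X]) =
      C a₀ * (X ^ 2 + C (a₂ / (2 * a₀))) ^ 2 := by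
  set c := a₂ / (2 * a₀) with hc
  have hc2 : 2 * a₀ * c = a₂ := by rw [hc]; field_simp [ha₀.ne']
  have hc4 : a₀ * c ^ 2 = a₄ := by
    rw [hc]
    field_simp
    nlinarith [hd]
  rw [h3, ← hc2, ← hc4]
  simp only [map_mul, map_add, map_pow, map_ofNat, C_0]
  ring

private lemma stmt15_back (a₀ a₂ a₃ a₄ : ℝ) (ha₀ : 0 < a₀)
    (hpos : ∀ t : ℝ, 0 < eval t (C a₀ * X ^ 4 + C a₂ * X ^ 2 + C a₃ * X + C a₄))
    (heq : (C a₀ * X ^ 4 + C a₂ * X ^ 2 + C a₃ * X + C a₄ : ℝ[X]) =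
      C a₀ * (X ^ 2 + C (a₂ / (2 * a₀))) ^ 2) :
    ∃ w : ℂ, 2 ≤ (Polynomial.map (algebraMap ℝ ℂ)
          (C a₀ * X ^ 4 + C a₂ * X ^ 2 + C a₃ * X + C a₄)).rootMultiplicity w := by
  set f : ℝ[X] := C a₀ * X ^ 4 + C a₂ * X ^ 2 + C a₃ * X + C a₄ with hf
  set c := a₂ / (2 * a₀) with hc
  have hcpos : 0 < c := by
    by_contra h
    push_neg at h
    have hp := hpos (Real.sqrt (-c))
    rw [heq] at hp
    simp only [eval_mul, eval_pow, eval_add, eval_C, eval_X] at hp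
    rw [Real.sq_sqrt (by linarith : (0:ℝ) ≤ -c)] at hp
    norm_num at hp
  have hf0 : f ≠ 0 := fun h => by simpa [h] using hpos 0
  have hF0 : f.map (algebraMap ℝ ℂ) ≠ 0 :=
    (Polynomial.map_ne_zero_iff (algebraMap ℝ ℂ).injective).mpr hf0
  set w : ℂ := Complex.I * Real.sqrt c with hwdef
  have hw2 : w ^ 2 = -(c : ℂ) := by
    rw [hwdef, mul_pow, Complex.I_sq]
    push_cast
    rw [← Complex.ofReal_pow, Real.sq_sqrt hcpos.le]
    ring
  refine ⟨w, ?_⟩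
  rw [le_rootMultiplicity_iff hF0]
  refine ⟨C (a₀ : ℂ) * (X + C w) ^ 2, ?_⟩
  have hmap : f.map (algebraMap ℝ ℂ) = C (a₀ : ℂ) * (X ^ 2 + C (c : ℂ)) ^ 2 := by
    rw [heq]
    simp [Polynomial.map_mul, Polynomial.map_pow, Polynomial.map_add]
  rw [hmap]
  have hfac : (X ^ 2 + C (c : ℂ)) = (X - C w) * (X + C w) := by
    have h1 : (X - C w) * (X + C w) = X ^ 2 - C (w ^ 2) := by
      simp only [map_pow]; ring
    rw [h1, hw2, map_neg, sub_neg_eq_add]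
  rw [hfac]
  ring

theorem stmt_15 (a₀ a₂ a₃ a₄ : ℝ) (ha₀ : 0 < a₀)
    (hpos : ∀ t : ℝ, 0 < eval t (C a₀ * X ^ 4 + C a₂ * X ^ 2 + C a₃ * X + C a₄)) :
    ((∃ w : ℂ, 2 ≤ (Polynomial.map (algebraMap ℝ ℂ)
          (C a₀ * X ^ 4 + C a₂ * X ^ 2 + C a₃ * X + C a₄)).rootMultiplicity w) ↔
        (a₃ = 0 ∧ a₂ ^ 2 - 4 * a₀ * a₄ = 0)) ∧
    ((∃ w : ℂ, 2 ≤ (Polynomial.map (algebraMap ℝ ℂ)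
          (C a₀ * X ^ 4 + C a₂ * X ^ 2 + C a₃ * X + C a₄)).rootMultiplicity w) ↔
        (C a₀ * X ^ 4 + C a₂ * X ^ 2 + C a₃ * X + C a₄ : Polynomial ℝ) =
          C a₀ * (X ^ 2 + C (a₂ / (2 * a₀))) ^ 2) := by
  constructor
  · constructor
    · rintro ⟨w, hw⟩
      exact stmt15_hard a₀ a₂ a₃ a₄ ha₀ hpos w hw
    · rintro ⟨h3, hd⟩
      exact stmt15_back a₀ a₂ a₃ a₄ ha₀ hpos (stmt15_factor a₀ a₂ a₃ a₄ ha₀ h3 hd)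
  · constructor
    · rintro ⟨w, hw⟩
      obtain ⟨h3, hd⟩ := stmt15_hard a₀ a₂ a₃ a₄ ha₀ hpos w hw
      exact stmt15_factor a₀ a₂ a₃ a₄ ha₀ h3 hd
    · exact fun h => stmt15_back a₀ a₂ a₃ a₄ ha₀ hpos h
end

section
/- Let k be a field, m, n ≥ 2. Define, for f of degree m with leading coefficient a₀ and roots α₁,…,α_m in an algebraic closure, and for g, h of degree ≤ n, Φ(f,g,h) = a₀^{(m−1)(n−1)} ∏_{1≤i<j≤m} (g(αᵢ)h(αⱼ) − g(αⱼ)h(αᵢ))/(αᵢ−αⱼ) when f is separable. Then Φ(f,g,h) is a symmetric polynomial expression in the roots, hence is given by a polynomial with integer coefficients in the coefficients of f, g, and h. -/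
open Polynomial Finset

section Qval
variable {A : Type*} [CommRing A] {A' : Type*} [CommRing A']

/-- `(x^d - y^d)/(x-y)`. -/
def dpow (d : ℕ) (x y : A) : A := ∑ i ∈ Finset.range d, x ^ i * y ^ (d - 1 - i)

lemma dpow_mul_sub (d : ℕ) (x y : A) : dpow d x y * (x - y) = x ^ d - y ^ d :=
  geom_sum₂_mul x y d

lemma dpow_symm (d : ℕ) (x y : A) : dpow d x y = dpow d y x := by
  unfold dpow
  conv_rhs => rw [← Finset.sum_range_reflect]
  refine Finset.sum_congr rfl fun i hi => ?_
  rw [Finset.mem_range] at hi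
  have h1 : d - 1 - (d - 1 - i) = i := by omega
  rw [h1, mul_comm]

lemma map_dpow (φ : A →+* A') (d : ℕ) (x y : A) :
    φ (dpow d x y) = dpow d (φ x) (φ y) := by
  simp [dpow]

/-- `(x^a y^b - x^b y^a)/(x-y)`. -/
def qmon (a b : ℕ) (x y : A) : A :=
  if b ≤ a then x ^ b * y ^ b * dpow (a - b) x y else -(x ^ a * y ^ a * dpow (b - a) x y)

lemma qmon_mul_sub (a b : ℕ) (x y : A) :
    qmon a b x y * (x - y) = x ^ a * y ^ b - x ^ b * y ^ a := by
  rw [qmon]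
  split_ifs with h
  · rw [mul_assoc, dpow_mul_sub, mul_sub]
    have e1 : x ^ b * y ^ b * x ^ (a - b) = x ^ a * y ^ b := by
      rw [mul_right_comm, ← pow_add, Nat.add_sub_cancel' h]
    have e2 : x ^ b * y ^ b * y ^ (a - b) = x ^ b * y ^ a := by
      rw [mul_assoc, ← pow_add, Nat.add_sub_cancel' h]
    rw [e1, e2]
  · push_neg at h
    rw [neg_mul, mul_assoc, dpow_mul_sub, mul_sub]
    have e1 : x ^ a * y ^ a * x ^ (b - a) = x ^ b * y ^ a := by
      rw [mul_right_comm, ← pow_add, Nat.add_sub_cancel' h.le]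
    have e2 : x ^ a * y ^ a * y ^ (b - a) = x ^ a * y ^ b := by
      rw [mul_assoc, ← pow_add, Nat.add_sub_cancel' h.le]
    rw [e1, e2]
    ring

lemma qmon_symm (a b : ℕ) (x y : A) : qmon a b x y = qmon a b y x := by
  rw [qmon, qmon]
  split_ifs with h <;> rw [dpow_symm] <;> ring

lemma map_qmon (φ : A →+* A') (a b : ℕ) (x y : A) :
    φ (qmon a b x y) = qmon a b (φ x) (φ y) := by
  rw [qmon, qmon]
  split_ifs with h <;> simp [map_dpow]

/-- universal `g` value `∑ b_j x^(n-j)`. -/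
def gval (n : ℕ) (b : Fin (n+1) → A) (x : A) : A := ∑ j : Fin (n+1), b j * x ^ (n - (j:ℕ))

/-- universal `(g(x)h(y)-g(y)h(x))/(x-y)`. -/
def qval (n : ℕ) (b c : Fin (n+1) → A) (x y : A) : A :=
  ∑ p : Fin (n+1), ∑ q : Fin (n+1), b p * c q * qmon (n - (p:ℕ)) (n - (q:ℕ)) x y

lemma qval_mul_sub (n : ℕ) (b c : Fin (n+1) → A) (x y : A) :
    qval n b c x y * (x - y) = gval n b x * gval n c y - gval n b y * gval n c x := by
  rw [qval, gval, gval, gval, gval, Finset.sum_mul_sum, Finset.sum_mul_sum,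
    ← Finset.sum_sub_distrib, Finset.sum_mul]
  refine Finset.sum_congr rfl fun p _ => ?_
  rw [← Finset.sum_sub_distrib, Finset.sum_mul]
  refine Finset.sum_congr rfl fun q _ => ?_
  rw [mul_assoc, qmon_mul_sub]
  ring

lemma qval_symm (n : ℕ) (b c : Fin (n+1) → A) (x y : A) :
    qval n b c x y = qval n b c y x := by
  unfold qval
  refine Finset.sum_congr rfl fun p _ => Finset.sum_congr rfl fun q _ => ?_
  rw [qmon_symm]

lemma map_qval (φ : A →+* A') (n : ℕ) (b c : Fin (n+1) → A) (x y : A) :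
    φ (qval n b c x y) = qval n (φ ∘ b) (φ ∘ c) (φ x) (φ y) := by
  simp [qval, map_qmon, Function.comp]

lemma map_gval (φ : A →+* A') (n : ℕ) (b : Fin (n+1) → A) (x : A) :
    φ (gval n b x) = gval n (φ ∘ b) (φ x) := by
  simp [gval, Function.comp]

end Qval

section Deg
open MvPolynomial
variable {R : Type*} [CommRing R] {σ : Type*} [DecidableEq σ] {i : σ}
variable {x y : MvPolynomial σ R} {dx dy : ℕ}

lemma degreeOf_dpow_le (hx : degreeOf i x ≤ dx) (hy : degreeOf i y ≤ dy) (d : ℕ) :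
    degreeOf i (dpow d x y) ≤ (d - 1) * (dx + dy) := by
  refine (degreeOf_sum_le i _ _).trans (Finset.sup_le fun s hs => ?_)
  rw [Finset.mem_range] at hs
  refine (degreeOf_mul_le _ _ _).trans ?_
  have h1 : degreeOf i (x ^ s) ≤ (d - 1) * dx :=
    (degreeOf_pow_le _ _ _).trans (Nat.mul_le_mul (by omega) hx)
  have h2 : degreeOf i (y ^ (d - 1 - s)) ≤ (d - 1) * dy :=
    (degreeOf_pow_le _ _ _).trans (Nat.mul_le_mul (by omega) hy)
  calc degreeOf i (x ^ s) + degreeOf i (y ^ (d - 1 - s)) ≤ (d-1)*dx + (d-1)*dy :=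
        Nat.add_le_add h1 h2
    _ = (d - 1) * (dx + dy) := (Nat.mul_add _ _ _).symm

lemma degreeOf_qmon_le {n a b : ℕ} (ha : a ≤ n) (hb : b ≤ n)
    (hx : degreeOf i x ≤ dx) (hy : degreeOf i y ≤ dy) :
    degreeOf i (qmon a b x y) ≤ (n - 1) * (dx + dy) := by
  rcases eq_or_ne a b with rfl | hne
  · simp [qmon, dpow]
  have main : ∀ a b : ℕ, a ≤ n → b < a →
      degreeOf i (x ^ b * y ^ b * dpow (a - b) x y) ≤ (n - 1) * (dx + dy) := by
    intro a b ha hba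
    refine (degreeOf_mul_le _ _ _).trans ?_
    have h1 : degreeOf i (x ^ b * y ^ b) ≤ b * (dx + dy) := by
      refine (degreeOf_mul_le _ _ _).trans ?_
      rw [Nat.mul_add]
      exact Nat.add_le_add ((degreeOf_pow_le _ _ _).trans (Nat.mul_le_mul_left _ hx))
        ((degreeOf_pow_le _ _ _).trans (Nat.mul_le_mul_left _ hy))
    have h2 := degreeOf_dpow_le hx hy (a - b)
    calc _ ≤ b * (dx + dy) + (a - b - 1) * (dx + dy) := Nat.add_le_add h1 h2
      _ = (b + (a - b - 1)) * (dx + dy) := (Nat.add_mul _ _ _).symm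
      _ ≤ (n - 1) * (dx + dy) := Nat.mul_le_mul_right _ (by omega)
  rw [qmon]
  split_ifs with h
  · exact main a b ha (by omega)
  · rw [degreeOf_neg]  -- maybe name differs
    exact main b a hb (by omega)

lemma degreeOf_qval_le {n : ℕ} {b c : Fin (n+1) → MvPolynomial σ R}
    (hb : ∀ p, degreeOf i (b p) = 0) (hc : ∀ p, degreeOf i (c p) = 0)
    (hx : degreeOf i x ≤ dx) (hy : degreeOf i y ≤ dy) :
    degreeOf i (qval n b c x y) ≤ (n - 1) * (dx + dy) := by
  refine (degreeOf_sum_le i _ _).trans (Finset.sup_le fun p _ => ?_)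
  refine (degreeOf_sum_le i _ _).trans (Finset.sup_le fun q _ => ?_)
  refine (degreeOf_mul_le _ _ _).trans ?_
  have h1 : degreeOf i (b p * c q) = 0 := by
    refine Nat.le_zero.1 ((degreeOf_mul_le _ _ _).trans ?_)
    rw [hb, hc]
  rw [h1, zero_add]
  exact degreeOf_qmon_le (Nat.sub_le _ _) (Nat.sub_le _ _) hx hy

end Deg

section Key
open MvPolynomial AddMonoidAlgebra

variable {R : Type*} [CommRing R] {m : ℕ}

lemma lex_zero_le [NeZero m] {a b : Lex (Fin m →₀ ℕ)} (h : a ≤ b) :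
    ofLex a 0 ≤ ofLex b 0 := by
  rcases (le_iff_eq_or_lt.1 h).imp id Finsupp.Lex.lt_iff.1 with rfl | ⟨i, hji, hlt⟩
  · exact le_rfl
  rcases eq_or_ne i 0 with rfl | hne
  · exact hlt.le
  · exact (hji 0 ((Fin.pos_iff_ne_zero' i).2 hne)).le

lemma mem_support_zero_le_degreeOf {p : MvPolynomial (Fin m) R} {t : Fin m →₀ ℕ}
    (ht : t ∈ p.support) (j : Fin m) : t j ≤ p.degreeOf j := by
  rw [degreeOf_eq_sup]
  exact Finset.le_sup (f := fun t => t j) ht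

lemma key_lemma [NeZero m] {D : ℕ} :
    ∀ (p : MvPolynomial (Fin m) R), p.IsSymmetric → p.degreeOf 0 ≤ D →
    ∃ W : MvPolynomial (Fin m) R,
      aeval (fun i : Fin m => esymm (Fin m) R ((i : ℕ) + 1)) W = p ∧
      ∀ t ∈ W.support, (∑ i, t i) ≤ D := by
  classical
  intro p
  induction' he : p.supDegree toLex using WellFoundedLT.induction with u ih generalizing p
  subst he
  intro hp hD
  obtain rfl | h0 := eq_or_ne p 0
  · exact ⟨0, by simp, by simp⟩
  -- supDegree first coordinate is ≤ D
  have hsupD : (ofLex (p.supDegree toLex)) 0 ≤ D := by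
    obtain ⟨a, ha, hea⟩ := AddMonoidAlgebra.exists_supDegree_mem_support toLex h0
    rw [hea]
    exact (mem_support_zero_le_degreeOf ha 0).trans hD
  set t₀ : Fin m →₀ ℕ :=
    Finsupp.equivFunOnFinite.symm (Fin.invAccumulate m m ↑(ofLex <| p.supDegree toLex)) with ht₀
  have hacc : Fin.accumulate m m ⇑t₀ = ↑(ofLex <| p.supDegree toLex) := by
    rw [ht₀]
    exact Fin.accumulate_invAccumulate le_rfl hp.antitone_supDegree
  have hwt : (∑ i, t₀ i) ≤ D := by
    have h0acc := congrFun hacc 0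
    rw [Fin.accumulate_apply] at h0acc
    have : ∑ i ∈ Finset.univ.filter (fun i : Fin m => (0:Fin m).val ≤ i.val), t₀ i = ∑ i, t₀ i := by
      apply Finset.sum_congr _ (fun _ _ => rfl)
      simp
    rw [this] at h0acc
    rw [h0acc]; exact hsupD
  set q := esymmAlgHomMonomial (Fin m) t₀ (p.leadingCoeff toLex) with hq
  have hlc : p.leadingCoeff toLex ≠ 0 := (leadingCoeff_ne_zero toLex.injective).2 h0
  have hd : q.supDegree toLex = p.supDegree toLex := by
    rw [← ofLex_inj, DFunLike.ext'_iff, hq, supDegree_esymmAlgHomMonomial hlc _ le_rfl]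
    exact hacc
  have haq : aeval (fun i : Fin m => esymm (Fin m) R ((i : ℕ) + 1))
      (monomial t₀ (p.leadingCoeff toLex)) = q := by
    rw [hq, esymmAlgHomMonomial, esymmAlgHom_apply]
  obtain hpq | hne := eq_or_ne p q
  · refine ⟨monomial t₀ (p.leadingCoeff toLex), haq.trans hpq.symm, fun t ht => ?_⟩
    rw [MvPolynomial.support_monomial, if_neg hlc, Finset.mem_singleton] at ht
    subst ht; exact hwt
  have hlt := (supDegree_sub_lt_of_leadingCoeff_eq toLex.injective hd.symm ?_).resolve_right
    hne
  · -- bound on degreeOf 0 (p - q)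
    have hq0 : ∀ t ∈ q.support, t 0 ≤ D := by
      intro t ht
      have : toLex t ≤ q.supDegree toLex := Finset.le_sup (f := toLex) ht
      have := lex_zero_le this
      rw [hd] at this
      exact this.trans hsupD
    have hDpq : (p - q).degreeOf 0 ≤ D := by
      rw [degreeOf_eq_sup]
      refine Finset.sup_le fun t ht => ?_
      have := MvPolynomial.support_sub (Fin m) p q ht
      rw [Finset.mem_union] at this
      rcases this with h | h
      · exact (mem_support_zero_le_degreeOf h 0).trans hD
      · exact hq0 t h
    obtain ⟨W, hW1, hW2⟩ := ih _ hlt (p - q) rfl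
      (hp.sub (isSymmetric_esymmAlgHomMonomial _ _)) hDpq
    refine ⟨W + monomial t₀ (p.leadingCoeff toLex), ?_, fun t ht => ?_⟩
    · rw [map_add, hW1, haq, sub_add_cancel]
    · rcases Finset.mem_union.1 (Finsupp.support_add ht) with h | h
      · exact hW2 t h
      · rw [Finsupp.mem_support_iff] at h
        have h' : MvPolynomial.coeff t
            ((MvPolynomial.monomial t₀) (AddMonoidAlgebra.leadingCoeff (⇑toLex) p)) ≠ 0 := h
        rw [MvPolynomial.coeff_monomial] at h'
        split_ifs at h' with heq
        · rw [← heq]; exact hwt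
        · exact (h' rfl).elim
  · rw [hq, leadingCoeff_esymmAlgHomMonomial t₀ le_rfl]

end Key

section Pairs
variable {M : Type*} [CommMonoid M] {m : ℕ}

lemma prod_pairs_perm (F : Fin m → Fin m → M) (hF : ∀ a b, F a b = F b a)
    (e : Equiv.Perm (Fin m)) :
    ∏ p ∈ Finset.univ.filter (fun p : Fin m × Fin m => p.1 < p.2), F (e p.1) (e p.2) =
    ∏ p ∈ Finset.univ.filter (fun p : Fin m × Fin m => p.1 < p.2), F p.1 p.2 := by
  classical
  set T := Finset.univ.filter (fun p : Fin m × Fin m => p.1 < p.2) with hT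
  have hmemT : ∀ p : Fin m × Fin m, p ∈ T ↔ p.1 < p.2 := by
    intro p; simp [hT]
  have key : ∀ σ : Equiv.Perm (Fin m), ∀ p ∈ T,
      (if σ p.1 < σ p.2 then (σ p.1, σ p.2) else (σ p.2, σ p.1)) ∈ T := by
    intro σ p hp
    rw [hmemT] at hp
    split_ifs with h
    · rw [hmemT]; exact h
    · rw [hmemT]
      exact lt_of_le_of_ne (not_lt.1 h) (fun hc => (hp.ne (σ.injective hc.symm)).elim)
  refine Finset.prod_nbij'
    (fun p => if e p.1 < e p.2 then (e p.1, e p.2) else (e p.2, e p.1))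
    (fun p => if e.symm p.1 < e.symm p.2 then (e.symm p.1, e.symm p.2)
      else (e.symm p.2, e.symm p.1)) (key e) (key e.symm) ?_ ?_ ?_
  · intro p hp
    rw [hmemT] at hp
    split_ifs <;> simp_all [Equiv.symm_apply_apply] <;>
      exact absurd ‹p.2 < p.1› (not_lt.2 hp.le)
  · intro p hp
    rw [hmemT] at hp
    split_ifs <;> simp_all [Equiv.apply_symm_apply] <;>
      exact absurd ‹p.2 < p.1› (not_lt.2 hp.le)
  · intro p hp
    split_ifs with h
    · rfl
    · exact hF _ _

end Pairs

/-- The Φ-invariant `Φ_{m,n}(f,g,h) = a₀^{(m-1)(n-1)} ∏_{i<j} (g(αᵢ)h(αⱼ) - g(αⱼ)h(αᵢ))/(αᵢ-αⱼ)`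
(for separable `f` of degree `m` with roots `αᵢ` and leading coefficient `a₀`, and `g`, `h` of
degree `≤ n`) is given by a single polynomial with integer coefficients in the coefficients
`aᵢ = coeff of x^{m-i}` of `f`, `bⱼ = coeff of x^{n-j}` of `g` and `cⱼ = coeff of x^{n-j}` of `h`,
uniformly in the field. -/
theorem stmt_18 (m n : ℕ) (hm : 2 ≤ m) (hn : 2 ≤ n) :
    ∃ Φ : MvPolynomial (Fin (m + 1) ⊕ (Fin (n + 1) ⊕ Fin (n + 1))) ℤ,
      ∀ (k : Type) (_ : Field k), ∀ (f g h : Polynomial k) (a₀ : k) (α : Fin m → k),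
        a₀ ≠ 0 → Function.Injective α → f = C a₀ * ∏ i, (X - C (α i)) →
        g.degree ≤ (n : WithBot ℕ) → h.degree ≤ (n : WithBot ℕ) →
        MvPolynomial.aeval
            (Sum.elim (fun i : Fin (m + 1) => f.coeff (m - (i : ℕ)))
              (Sum.elim (fun j : Fin (n + 1) => g.coeff (n - (j : ℕ)))
                (fun j : Fin (n + 1) => h.coeff (n - (j : ℕ))))) Φ =
          a₀ ^ ((m - 1) * (n - 1)) *
            ∏ p ∈ Finset.univ.filter (fun p : Fin m × Fin m => p.1 < p.2),
              (g.eval (α p.1) * h.eval (α p.2) - g.eval (α p.2) * h.eval (α p.1)) /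
                (α p.1 - α p.2) := by
  open MvPolynomial in
  classical
  have hmz : NeZero m := ⟨by omega⟩
  set D := (m - 1) * (n - 1) with hDdef
  set B : Fin (n+1) → MvPolynomial (Fin m) (MvPolynomial (Fin (n+1) ⊕ Fin (n+1)) ℤ) :=
    fun j => MvPolynomial.C (MvPolynomial.X (Sum.inl j)) with hBdef
  set Cc : Fin (n+1) → MvPolynomial (Fin m) (MvPolynomial (Fin (n+1) ⊕ Fin (n+1)) ℤ) :=
    fun j => MvPolynomial.C (MvPolynomial.X (Sum.inr j)) with hCdef
  set T := Finset.univ.filter (fun p : Fin m × Fin m => p.1 < p.2) with hTdef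
  set P := ∏ p ∈ T, qval n B Cc (MvPolynomial.X p.1) (MvPolynomial.X p.2) with hPdef
  have hPsym : P.IsSymmetric := by
    intro e
    rw [hPdef, map_prod]
    have hfac : ∀ p : Fin m × Fin m,
        rename e (qval n B Cc (MvPolynomial.X p.1) (MvPolynomial.X p.2)) =
        qval n B Cc (MvPolynomial.X (e p.1)) (MvPolynomial.X (e p.2)) := by
      intro p
      have h1 := map_qval (rename e).toRingHom n B Cc
        (MvPolynomial.X p.1) (MvPolynomial.X p.2)
      simp only [AlgHom.toRingHom_eq_coe, RingHom.coe_coe] at h1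
      have hB : (⇑(rename (R := MvPolynomial (Fin (n+1) ⊕ Fin (n+1)) ℤ) e) ∘ B) = B := by
        funext j; simp [hBdef]
      have hC : (⇑(rename (R := MvPolynomial (Fin (n+1) ⊕ Fin (n+1)) ℤ) e) ∘ Cc) = Cc := by
        funext j; simp [hCdef]
      rw [h1, hB, hC, rename_X, rename_X]
    simp_rw [hfac]
    exact prod_pairs_perm (fun a b => qval n B Cc (MvPolynomial.X a) (MvPolynomial.X b))
      (fun a b => qval_symm n B Cc _ _) e
  have hPdeg : P.degreeOf 0 ≤ D := by
    refine (degreeOf_prod_le _ _ _).trans ?_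
    have hstep : ∑ p ∈ T, degreeOf 0 (qval n B Cc (MvPolynomial.X p.1) (MvPolynomial.X p.2)) ≤
        ∑ p ∈ T, (if p.1 = 0 then (n - 1) * 1 else 0) := by
      refine Finset.sum_le_sum fun p hp => ?_
      have hp12 : p.1 < p.2 := by
        rw [hTdef, Finset.mem_filter] at hp; exact hp.2
      have hp2 : (0 : Fin m) ≠ p.2 := fun hc =>
        (Fin.pos_iff_ne_zero' p.2).1 (lt_of_le_of_lt (Fin.zero_le p.1) hp12) hc.symm
      have hy : degreeOf 0 (MvPolynomial.X p.2 :
          MvPolynomial (Fin m) (MvPolynomial (Fin (n+1) ⊕ Fin (n+1)) ℤ)) ≤ 0 := by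
        rw [degreeOf_X, if_neg hp2]
      have hbc : ∀ j, degreeOf (0 : Fin m) (B j) = 0 := fun j => by rw [hBdef]; exact degreeOf_C _ _
      have hcc : ∀ j, degreeOf (0 : Fin m) (Cc j) = 0 := fun j => by rw [hCdef]; exact degreeOf_C _ _
      by_cases h1 : p.1 = 0
      · rw [if_pos h1]
        have hx : degreeOf 0 (MvPolynomial.X p.1 :
            MvPolynomial (Fin m) (MvPolynomial (Fin (n+1) ⊕ Fin (n+1)) ℤ)) ≤ 1 := by
          rw [degreeOf_X, if_pos h1.symm]
        have := degreeOf_qval_le (i := (0 : Fin m)) hbc hcc hx hy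
        simpa using this
      · rw [if_neg h1]
        have hx : degreeOf 0 (MvPolynomial.X p.1 :
            MvPolynomial (Fin m) (MvPolynomial (Fin (n+1) ⊕ Fin (n+1)) ℤ)) ≤ 0 := by
          rw [degreeOf_X, if_neg (fun hc => h1 hc.symm)]
        have := degreeOf_qval_le (i := (0 : Fin m)) hbc hcc hx hy
        simpa using this
    refine hstep.trans (le_of_eq ?_)
    rw [hTdef, Finset.sum_filter, Fintype.sum_prod_type]
    rw [Finset.sum_eq_single_of_mem (0 : Fin m) (Finset.mem_univ _)
      (fun a _ ha => by simp [ha])]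
    have hrw : ∀ b : Fin m,
        (if (0 : Fin m) < b then (if (0 : Fin m) = 0 then (n-1)*1 else 0) else 0) =
        (if (0 : Fin m) < b then (n-1) else 0) := by
      intro b; split_ifs <;> simp_all
    simp only [hrw]
    rw [Finset.sum_ite, Finset.sum_const, Finset.sum_const_zero, add_zero, smul_eq_mul]
    have hfil : Finset.univ.filter (fun b : Fin m => (0 : Fin m) < b) = Finset.univ.erase 0 := by
      ext b
      simp [Fin.pos_iff_ne_zero', and_comm]
    rw [hfil, Finset.card_erase_of_mem (Finset.mem_univ _), Finset.card_univ, Fintype.card_fin]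
    simp [hDdef]
  obtain ⟨W, hW1, hW2⟩ := key_lemma (D := D) P hPsym hPdeg
  refine ⟨∑ t ∈ W.support,
    (rename Sum.inr (W.coeff t)) * (MvPolynomial.X (Sum.inl 0)) ^ (D - ∑ i, t i) *
    ∏ i : Fin m, ((-1) ^ ((i : ℕ) + 1) * MvPolynomial.X (Sum.inl i.succ)) ^ (t i), ?_⟩
  intro k instK f g h a₀ α ha₀ hα hf hg hh
  set gc : Fin (n+1) → k := fun j => g.coeff (n - (j : ℕ)) with hgcdef
  set hc : Fin (n+1) → k := fun j => h.coeff (n - (j : ℕ)) with hhcdef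
  set φ₀ : MvPolynomial (Fin (n+1) ⊕ Fin (n+1)) ℤ →+* k :=
    (MvPolynomial.aeval (R := ℤ) (Sum.elim gc hc)).toRingHom with hφ₀def
  set φ : MvPolynomial (Fin m) (MvPolynomial (Fin (n+1) ⊕ Fin (n+1)) ℤ) →+* k :=
    MvPolynomial.eval₂Hom φ₀ α with hφdef
  set E : ℕ → k := fun j => (Finset.univ.val.map α).esymm j with hEdef
  have hcard : Multiset.card (Finset.univ.val.map α) = m := by simp
  have hcoeff : ∀ j : ℕ, j ≤ m → f.coeff (m - j) = a₀ * ((-1 : k) ^ j * E j) := by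
    intro j hj
    rw [hf, Polynomial.coeff_C_mul]
    congr 1
    have h1 : (∏ i, (Polynomial.X - Polynomial.C (α i))) =
        ((Finset.univ.val.map α).map (fun t => Polynomial.X - Polynomial.C t)).prod := by
      rw [Multiset.map_map]
      rfl
    rw [h1, Multiset.prod_X_sub_C_coeff _ (by rw [hcard]; omega), hcard, Nat.sub_sub_self hj,
      hEdef]
  have hE0 : E 0 = 1 := by
    rw [hEdef]
    simp [Multiset.esymm, Multiset.powersetCard_zero_left]
  have ha0m : f.coeff m = a₀ := by
    have := hcoeff 0 (by omega)
    rw [Nat.sub_zero, hE0, pow_zero, one_mul, mul_one] at this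
    exact this
  have hesymm : ∀ j : ℕ,
      φ (MvPolynomial.esymm (Fin m) (MvPolynomial (Fin (n+1) ⊕ Fin (n+1)) ℤ) j) = E j := by
    intro j
    rw [hφdef, MvPolynomial.esymm, map_sum]
    simp only [map_prod, MvPolynomial.eval₂Hom_X']
    rw [hEdef]
    dsimp only
    rw [Finset.esymm_map_val]
  have hφB : (⇑φ ∘ B) = gc := by
    funext j
    rw [Function.comp_apply, hBdef]
    rw [hφdef, MvPolynomial.eval₂Hom_C]
    show (MvPolynomial.aeval (Sum.elim gc hc)) (MvPolynomial.X (Sum.inl j)) = gc j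
    rw [MvPolynomial.aeval_X, Sum.elim_inl]
  have hφC : (⇑φ ∘ Cc) = hc := by
    funext j
    rw [Function.comp_apply, hCdef]
    rw [hφdef, MvPolynomial.eval₂Hom_C]
    show (MvPolynomial.aeval (Sum.elim gc hc)) (MvPolynomial.X (Sum.inr j)) = hc j
    rw [MvPolynomial.aeval_X, Sum.elim_inr]
  have hφP : φ P = ∏ p ∈ T, qval n gc hc (α p.1) (α p.2) := by
    rw [hPdef, map_prod]
    refine Finset.prod_congr rfl fun p _ => ?_
    rw [map_qval, hφB, hφC, hφdef, MvPolynomial.eval₂Hom_X', MvPolynomial.eval₂Hom_X']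
  have hgeval : ∀ (q : Polynomial k), q.degree ≤ (n : WithBot ℕ) → ∀ u : k,
      q.eval u = gval n (fun j : Fin (n+1) => q.coeff (n - (j : ℕ))) u := by
    intro q hq u
    have hdeg : q.natDegree < n + 1 :=
      Nat.lt_succ_of_le (Polynomial.natDegree_le_iff_degree_le.2 hq)
    rw [Polynomial.eval_eq_sum_range' hdeg]
    rw [show gval n (fun j : Fin (n+1) => q.coeff (n - (j:ℕ))) u
        = ∑ j : Fin (n+1), q.coeff (n - (j:ℕ)) * u ^ (n - (j:ℕ)) from rfl]
    rw [Fin.sum_univ_eq_sum_range (fun j => q.coeff (n - j) * u ^ (n - j)) (n+1)]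
    rw [← Finset.sum_range_reflect (fun i => q.coeff i * u ^ i) (n+1)]
    simp [Nat.add_sub_cancel]
  have hprod : ∏ p ∈ T, ((g.eval (α p.1) * h.eval (α p.2) - g.eval (α p.2) * h.eval (α p.1)) /
      (α p.1 - α p.2)) = φ P := by
    rw [hφP]
    refine Finset.prod_congr rfl fun p hp => ?_
    have hp12 : p.1 < p.2 := by rw [hTdef, Finset.mem_filter] at hp; exact hp.2
    have hne : α p.1 - α p.2 ≠ 0 := sub_ne_zero.2 fun hcon => absurd (hα hcon) hp12.ne
    have hgeval' : ∀ u, g.eval u = gval n gc u := fun u => by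
      rw [hgcdef]; exact hgeval g hg u
    have hheval' : ∀ u, h.eval u = gval n hc u := fun u => by
      rw [hhcdef]; exact hgeval h hh u
    rw [div_eq_iff hne, qval_mul_sub, hgeval', hgeval', hheval', hheval']
  have hcompC : φ.comp (MvPolynomial.C) = φ₀ := RingHom.ext fun r => by
    rw [RingHom.comp_apply, hφdef, MvPolynomial.eval₂Hom_C]
  have hWeval : φ (MvPolynomial.aeval (fun i : Fin m =>
      MvPolynomial.esymm (Fin m) (MvPolynomial (Fin (n+1) ⊕ Fin (n+1)) ℤ) ((i : ℕ) + 1)) W)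
      = ∑ t ∈ W.support, φ₀ (W.coeff t) * ∏ i : Fin m, E ((i : ℕ) + 1) ^ (t i) := by
    rw [MvPolynomial.aeval_def, MvPolynomial.eval₂_comp_left φ]
    have h2 : (⇑φ ∘ fun i : Fin m => MvPolynomial.esymm (Fin m)
        (MvPolynomial (Fin (n+1) ⊕ Fin (n+1)) ℤ) ((i:ℕ)+1)) = fun i : Fin m => E ((i:ℕ)+1) :=
      funext fun i => hesymm _
    rw [MvPolynomial.algebraMap_eq, hcompC, h2, MvPolynomial.eval₂_eq']
  have hterm : ∀ t ∈ W.support,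
      φ₀ (W.coeff t) * a₀ ^ (D - ∑ i, t i) *
        ∏ i : Fin m, ((-1 : k) ^ ((i:ℕ)+1) * f.coeff (m - ((i:ℕ)+1))) ^ (t i)
      = a₀ ^ D * (φ₀ (W.coeff t) * ∏ i : Fin m, E ((i : ℕ) + 1) ^ (t i)) := by
    intro t ht
    have h1 : ∀ i : Fin m, ((-1 : k) ^ ((i:ℕ)+1) * f.coeff (m - ((i:ℕ)+1)))
        = a₀ * E ((i:ℕ)+1) := by
      intro i
      rw [hcoeff ((i:ℕ)+1) (by have := i.2; omega)]
      have hsq : ((-1 : k) ^ ((i:ℕ)+1)) * ((-1 : k) ^ ((i:ℕ)+1)) = 1 := by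
        rw [← mul_pow]; norm_num
      calc (-1:k)^((i:ℕ)+1) * (a₀ * ((-1:k)^((i:ℕ)+1) * E ((i:ℕ)+1)))
          = ((-1:k)^((i:ℕ)+1) * (-1:k)^((i:ℕ)+1)) * (a₀ * E ((i:ℕ)+1)) := by ring
        _ = a₀ * E ((i:ℕ)+1) := by rw [hsq, one_mul]
    have h2 : ∏ i : Fin m, ((-1 : k) ^ ((i:ℕ)+1) * f.coeff (m - ((i:ℕ)+1))) ^ (t i)
        = a₀ ^ (∑ i, t i) * ∏ i : Fin m, E ((i:ℕ)+1) ^ (t i) := by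
      simp only [h1, mul_pow, Finset.prod_mul_distrib, Finset.prod_pow_eq_pow_sum]
    rw [h2]
    have h3 : a₀ ^ (D - ∑ i, t i) * a₀ ^ (∑ i, t i) = a₀ ^ D := by
      rw [← pow_add, Nat.sub_add_cancel (hW2 t ht)]
    calc φ₀ (W.coeff t) * a₀ ^ (D - ∑ i, t i) *
          (a₀ ^ (∑ i, t i) * ∏ i : Fin m, E ((i:ℕ)+1) ^ (t i))
        = (a₀ ^ (D - ∑ i, t i) * a₀ ^ (∑ i, t i)) *
          (φ₀ (W.coeff t) * ∏ i : Fin m, E ((i:ℕ)+1) ^ (t i)) := by ring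
      _ = a₀ ^ D * (φ₀ (W.coeff t) * ∏ i : Fin m, E ((i:ℕ)+1) ^ (t i)) := by rw [h3]
  rw [hprod, ← hW1, hWeval, Finset.mul_sum, map_sum]
  refine Finset.sum_congr rfl fun t ht => ?_
  rw [map_mul, map_mul, map_pow, map_prod, MvPolynomial.aeval_rename, MvPolynomial.aeval_X]
  simp only [Sum.elim_comp_inr, Sum.elim_inl, Fin.val_zero, Nat.sub_zero, ha0m, map_mul,
    map_pow, map_neg, map_one, MvPolynomial.aeval_X, Fin.val_succ]
  exact hterm t ht
end
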